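/- arXiv:1105.6206 — 4 statements merged into one kernel-verified Lean document; each statement's English description precedes it below -/
import Mathlib

section
/- Let S : K' → K be a 2-functor between 2-categories and u : C → SR a morphism in K. Then the vertical identity square i^v_u in the double category H(K) (with K' viewed via H(K')) is a horizontally universal square from the vertical identity 1^v_C to the induced double functor H(S) if and only if for every object D of K' the functor K'(R,D) → K(C,SD), f' ↦ Sf' ∘ u, is an isomorphism of categories (i.e., u is 2-universal). -/
set_option linter.unusedVariables false

/-! Core definitions: strict 2-categories and strict double categories. -/

universe u v w x u' v' w' x' u'' v'' w'' x''

/-- A (strict) 2-category, given by explicit data.  The 1-dimensional category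
laws are included as propositional fields; the 2-dimensional laws are collected
in `TwoCat.Laws`. -/
structure TwoCat where
  Obj : Type u
  Hom : Obj → Obj → Type v
  Cell : ∀ {a b : Obj}, Hom a b → Hom a b → Type w
  hid : ∀ a, Hom a a
  hcomp : ∀ {a b c}, Hom a b → Hom b c → Hom a c
  hid_comp : ∀ {a b} (f : Hom a b), hcomp (hid a) f = f
  hcomp_id : ∀ {a b} (f : Hom a b), hcomp f (hid b) = f
  hassoc : ∀ {a b c d} (f : Hom a b) (g : Hom b c) (h : Hom c d),
    hcomp (hcomp f g) h = hcomp f (hcomp g h)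
  cid : ∀ {a b} (f : Hom a b), Cell f f
  vcomp : ∀ {a b} {f g h : Hom a b}, Cell f g → Cell g h → Cell f h
  hcomp₂ : ∀ {a b c} {f f' : Hom a b} {g g' : Hom b c},
    Cell f f' → Cell g g' → Cell (hcomp f g) (hcomp f' g')

namespace TwoCat

/-- Transport a 2-cell along equalities of its boundary 1-cells. -/
def recast (K : TwoCat) {a b : K.Obj} {f f' g g' : K.Hom a b}
    (hf : f = f') (hg : g = g') (α : K.Cell f g) : K.Cell f' g' := by
  cases hf; cases hg; exact α

/-- The 2-dimensional laws of a strict 2-category. -/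
structure Laws (K : TwoCat) : Prop where
  vcomp_cid : ∀ {a b} {f g : K.Hom a b} (α : K.Cell f g), K.vcomp α (K.cid g) = α
  cid_vcomp : ∀ {a b} {f g : K.Hom a b} (α : K.Cell f g), K.vcomp (K.cid f) α = α
  vcomp_assoc : ∀ {a b} {f g h i : K.Hom a b} (α : K.Cell f g) (β : K.Cell g h)
    (γ : K.Cell h i), K.vcomp (K.vcomp α β) γ = K.vcomp α (K.vcomp β γ)
  hcomp₂_cid : ∀ {a b c} (f : K.Hom a b) (g : K.Hom b c),
    K.hcomp₂ (K.cid f) (K.cid g) = K.cid (K.hcomp f g)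
  interchange : ∀ {a b c} {f f' f'' : K.Hom a b} {g g' g'' : K.Hom b c}
    (α : K.Cell f f') (α' : K.Cell f' f'') (β : K.Cell g g') (β' : K.Cell g' g''),
    K.hcomp₂ (K.vcomp α α') (K.vcomp β β') = K.vcomp (K.hcomp₂ α β) (K.hcomp₂ α' β')
  hcomp₂_assoc : ∀ {a b c d} {f f' : K.Hom a b} {g g' : K.Hom b c} {h h' : K.Hom c d}
    (α : K.Cell f f') (β : K.Cell g g') (γ : K.Cell h h'),
    HEq (K.hcomp₂ (K.hcomp₂ α β) γ) (K.hcomp₂ α (K.hcomp₂ β γ))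
  id_hcomp₂ : ∀ {a b} {f f' : K.Hom a b} (α : K.Cell f f'),
    HEq (K.hcomp₂ (K.cid (K.hid a)) α) α
  hcomp₂_id : ∀ {a b} {f f' : K.Hom a b} (α : K.Cell f f'),
    HEq (K.hcomp₂ α (K.cid (K.hid b))) α

/-- The same 2-category with 2-cells reversed. -/
def co (K : TwoCat) : TwoCat where
  Obj := K.Obj
  Hom := K.Hom
  Cell f g := K.Cell g f
  hid := K.hid
  hcomp := K.hcomp
  hid_comp := K.hid_comp
  hcomp_id := K.hcomp_id
  hassoc := K.hassoc
  cid := K.cid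
  vcomp α β := K.vcomp β α
  hcomp₂ α β := K.hcomp₂ α β

end TwoCat

/-- A (strict) double category, given by explicit data.  The 1-dimensional
category laws for horizontal and vertical morphisms are included; the
square-level laws are collected in `DoubleCat.Laws`. -/
structure DoubleCat where
  Obj : Type u
  Hor : Obj → Obj → Type v
  Ver : Obj → Obj → Type w
  Sq : ∀ {a b c d : Obj}, Hor a b → Ver a c → Ver b d → Hor c d → Type x
  hId : ∀ a, Hor a a
  hComp : ∀ {a b c}, Hor a b → Hor b c → Hor a c
  vId : ∀ a, Ver a a
  vComp : ∀ {a b c}, Ver a b → Ver b c → Ver a c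
  hId_comp : ∀ {a b} (f : Hor a b), hComp (hId a) f = f
  hComp_id : ∀ {a b} (f : Hor a b), hComp f (hId b) = f
  hAssoc : ∀ {a b c d} (f : Hor a b) (g : Hor b c) (h : Hor c d),
    hComp (hComp f g) h = hComp f (hComp g h)
  vId_comp : ∀ {a b} (j : Ver a b), vComp (vId a) j = j
  vComp_id : ∀ {a b} (j : Ver a b), vComp j (vId b) = j
  vAssoc : ∀ {a b c d} (j : Ver a b) (k : Ver b c) (l : Ver c d),
    vComp (vComp j k) l = vComp j (vComp k l)
  idSqV : ∀ {a b} (f : Hor a b), Sq f (vId a) (vId b) f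
  idSqH : ∀ {a b} (j : Ver a b), Sq (hId a) j j (hId b)
  hCompSq : ∀ {a b c a' b' c'} {f : Hor a b} {g : Hor b c} {j : Ver a a'}
    {k : Ver b b'} {l : Ver c c'} {f' : Hor a' b'} {g' : Hor b' c'},
    Sq f j k f' → Sq g k l g' → Sq (hComp f g) j l (hComp f' g')
  vCompSq : ∀ {a b c d e e'} {f : Hor a b} {j : Ver a c} {k : Ver b d}
    {g : Hor c d} {j' : Ver c e} {k' : Ver d e'} {h : Hor e e'},
    Sq f j k g → Sq g j' k' h → Sq f (vComp j j') (vComp k k') h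

namespace DoubleCat

/-- Transport a square along equalities of its four boundaries. -/
def recast (D : DoubleCat) {a b c d : D.Obj} {f f' : D.Hor a b} {j j' : D.Ver a c}
    {k k' : D.Ver b d} {g g' : D.Hor c d} (hf : f = f') (hj : j = j') (hk : k = k')
    (hg : g = g') (α : D.Sq f j k g) : D.Sq f' j' k' g' := by
  cases hf; cases hj; cases hk; cases hg; exact α

/-- The square-level laws of a strict double category. -/
structure Laws (D : DoubleCat) : Prop where
  hCompSq_assoc : ∀ {a₁ a₂ a₃ a₄ b₁ b₂ b₃ b₄} {f₁ : D.Hor a₁ a₂} {f₂ : D.Hor a₂ a₃}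
    {f₃ : D.Hor a₃ a₄} {j₁ : D.Ver a₁ b₁} {j₂ : D.Ver a₂ b₂} {j₃ : D.Ver a₃ b₃}
    {j₄ : D.Ver a₄ b₄} {g₁ : D.Hor b₁ b₂} {g₂ : D.Hor b₂ b₃} {g₃ : D.Hor b₃ b₄}
    (α : D.Sq f₁ j₁ j₂ g₁) (β : D.Sq f₂ j₂ j₃ g₂) (γ : D.Sq f₃ j₃ j₄ g₃),
    HEq (D.hCompSq (D.hCompSq α β) γ) (D.hCompSq α (D.hCompSq β γ))
  idSqH_hComp : ∀ {a b c d} {f : D.Hor a b} {j : D.Ver a c} {k : D.Ver b d}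
    {g : D.Hor c d} (α : D.Sq f j k g), HEq (D.hCompSq (D.idSqH j) α) α
  hComp_idSqH : ∀ {a b c d} {f : D.Hor a b} {j : D.Ver a c} {k : D.Ver b d}
    {g : D.Hor c d} (α : D.Sq f j k g), HEq (D.hCompSq α (D.idSqH k)) α
  vCompSq_assoc : ∀ {a₁ b₁ a₂ b₂ a₃ b₃ a₄ b₄} {f₁ : D.Hor a₁ b₁} {f₂ : D.Hor a₂ b₂}
    {f₃ : D.Hor a₃ b₃} {f₄ : D.Hor a₄ b₄} {j₁ : D.Ver a₁ a₂} {j₂ : D.Ver a₂ a₃}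
    {j₃ : D.Ver a₃ a₄} {k₁ : D.Ver b₁ b₂} {k₂ : D.Ver b₂ b₃} {k₃ : D.Ver b₃ b₄}
    (α : D.Sq f₁ j₁ k₁ f₂) (β : D.Sq f₂ j₂ k₂ f₃) (γ : D.Sq f₃ j₃ k₃ f₄),
    HEq (D.vCompSq (D.vCompSq α β) γ) (D.vCompSq α (D.vCompSq β γ))
  idSqV_vComp : ∀ {a b c d} {f : D.Hor a b} {j : D.Ver a c} {k : D.Ver b d}
    {g : D.Hor c d} (α : D.Sq f j k g), HEq (D.vCompSq (D.idSqV f) α) α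
  vComp_idSqV : ∀ {a b c d} {f : D.Hor a b} {j : D.Ver a c} {k : D.Ver b d}
    {g : D.Hor c d} (α : D.Sq f j k g), HEq (D.vCompSq α (D.idSqV g)) α
  interchange : ∀ {a₁ a₂ a₃ b₁ b₂ b₃ c₁ c₂ c₃} {f₁ : D.Hor a₁ a₂} {f₂ : D.Hor a₂ a₃}
    {g₁ : D.Hor b₁ b₂} {g₂ : D.Hor b₂ b₃} {h₁ : D.Hor c₁ c₂} {h₂ : D.Hor c₂ c₃}
    {j₁ : D.Ver a₁ b₁} {j₂ : D.Ver a₂ b₂} {j₃ : D.Ver a₃ b₃}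
    {k₁ : D.Ver b₁ c₁} {k₂ : D.Ver b₂ c₂} {k₃ : D.Ver b₃ c₃}
    (α : D.Sq f₁ j₁ j₂ g₁) (β : D.Sq f₂ j₂ j₃ g₂)
    (α' : D.Sq g₁ k₁ k₂ h₁) (β' : D.Sq g₂ k₂ k₃ h₂),
    D.hCompSq (D.vCompSq α α') (D.vCompSq β β')
      = D.vCompSq (D.hCompSq α β) (D.hCompSq α' β')
  idSqH_vComp : ∀ {a b c} (j : D.Ver a b) (j' : D.Ver b c),
    D.vCompSq (D.idSqH j) (D.idSqH j') = D.idSqH (D.vComp j j')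
  idSqV_hComp : ∀ {a b c} (f : D.Hor a b) (g : D.Hor b c),
    D.hCompSq (D.idSqV f) (D.idSqV g) = D.idSqV (D.hComp f g)

/-- The horizontal 2-category of a double category. -/
def H (D : DoubleCat) : TwoCat where
  Obj := D.Obj
  Hom := D.Hor
  Cell f g := D.Sq f (D.vId _) (D.vId _) g
  hid := D.hId
  hcomp := D.hComp
  hid_comp := D.hId_comp
  hcomp_id := D.hComp_id
  hassoc := D.hAssoc
  cid := D.idSqV
  vcomp α β := D.recast rfl (D.vId_comp _) (D.vId_comp _) rfl (D.vCompSq α β)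
  hcomp₂ := D.hCompSq

/-- The vertical 2-category of a double category. -/
def V (D : DoubleCat) : TwoCat where
  Obj := D.Obj
  Hom := D.Ver
  Cell j k := D.Sq (D.hId _) j k (D.hId _)
  hid := D.vId
  hcomp := D.vComp
  hid_comp := D.vId_comp
  hcomp_id := D.vComp_id
  hassoc := D.vAssoc
  cid := D.idSqH
  vcomp α β := D.recast (D.hId_comp _) rfl rfl (D.hId_comp _) (D.hCompSq α β)
  hcomp₂ := D.vCompSq

end DoubleCat
namespace TwoCat

/-- The double category of direct quintets of a 2-category. -/
def Quintet (K : TwoCat) : DoubleCat where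
  Obj := K.Obj
  Hor := K.Hom
  Ver := K.Hom
  Sq f j k g := K.Cell (K.hcomp f k) (K.hcomp j g)
  hId := K.hid
  hComp := K.hcomp
  vId := K.hid
  vComp := K.hcomp
  hId_comp := K.hid_comp
  hComp_id := K.hcomp_id
  hAssoc := K.hassoc
  vId_comp := K.hid_comp
  vComp_id := K.hcomp_id
  vAssoc := K.hassoc
  idSqV f := K.recast (K.hcomp_id f).symm (K.hid_comp f).symm (K.cid f)
  idSqH j := K.recast (K.hid_comp j).symm (K.hcomp_id j).symm (K.cid j)
  hCompSq {a b c a' b' c'} {f g j k l f' g'} α β :=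
    K.recast (K.hassoc f g l).symm (K.hassoc j f' g')
      (K.vcomp (K.hcomp₂ (K.cid f) β)
        (K.recast (K.hassoc f k g') rfl (K.hcomp₂ α (K.cid g'))))
  vCompSq {a b c d e e'} {f j k g j' k' h} α β :=
    K.recast rfl (K.hassoc j j' h).symm
      (K.vcomp (K.recast (K.hassoc f k k') (K.hassoc j g k') (K.hcomp₂ α (K.cid k')))
        (K.hcomp₂ (K.cid j) β))

/-- The double category of inverse quintets of a 2-category. -/
def InvQuintet (K : TwoCat) : DoubleCat where
  Obj := K.Obj
  Hor := K.Hom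
  Ver a b := K.Hom b a
  Sq {a b c d} f j k g := K.Cell (K.hcomp j f) (K.hcomp g k)
  hId := K.hid
  hComp := K.hcomp
  vId := K.hid
  vComp j k := K.hcomp k j
  hId_comp := K.hid_comp
  hComp_id := K.hcomp_id
  hAssoc := K.hassoc
  vId_comp j := K.hcomp_id j
  vComp_id j := K.hid_comp j
  vAssoc j k l := (K.hassoc l k j).symm
  idSqV f := K.recast (K.hid_comp f).symm (K.hcomp_id f).symm (K.cid f)
  idSqH j := K.recast (K.hcomp_id j).symm (K.hid_comp j).symm (K.cid j)
  hCompSq {a b c a' b' c'} {f g j k l f' g'} α β :=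
    K.recast rfl (K.hassoc f' g' l).symm
      (K.vcomp (K.recast (K.hassoc j f g) (K.hassoc f' k g) (K.hcomp₂ α (K.cid g)))
        (K.hcomp₂ (K.cid f') β))
  vCompSq {a b c d e e'} {f j k g j' k' h} α β :=
    K.recast (K.hassoc j' j f).symm (K.hassoc h k' k)
      (K.vcomp (K.hcomp₂ (K.cid j') α)
        (K.recast (K.hassoc j' g k) rfl (K.hcomp₂ β (K.cid k))))

end TwoCat

/-- A (strict) double functor: the data.  The strict preservation laws are
collected in `DoubleFunctor.Laws`. -/
structure DoubleFunctor (C : DoubleCat) (D : DoubleCat) where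
  obj : C.Obj → D.Obj
  hmap : ∀ {a b}, C.Hor a b → D.Hor (obj a) (obj b)
  vmap : ∀ {a b}, C.Ver a b → D.Ver (obj a) (obj b)
  smap : ∀ {a b c d} {f : C.Hor a b} {j : C.Ver a c} {k : C.Ver b d}
    {g : C.Hor c d}, C.Sq f j k g → D.Sq (hmap f) (vmap j) (vmap k) (hmap g)

namespace DoubleFunctor

variable {C D E : DoubleCat}

/-- A double functor strictly preserves identities and compositions. -/
structure Laws (F : DoubleFunctor C D) : Prop where
  hmap_id : ∀ a, F.hmap (C.hId a) = D.hId (F.obj a)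
  hmap_comp : ∀ {a b c} (f : C.Hor a b) (g : C.Hor b c),
    F.hmap (C.hComp f g) = D.hComp (F.hmap f) (F.hmap g)
  vmap_id : ∀ a, F.vmap (C.vId a) = D.vId (F.obj a)
  vmap_comp : ∀ {a b c} (j : C.Ver a b) (k : C.Ver b c),
    F.vmap (C.vComp j k) = D.vComp (F.vmap j) (F.vmap k)
  smap_idSqV : ∀ {a b} (f : C.Hor a b), HEq (F.smap (C.idSqV f)) (D.idSqV (F.hmap f))
  smap_idSqH : ∀ {a b} (j : C.Ver a b), HEq (F.smap (C.idSqH j)) (D.idSqH (F.vmap j))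
  smap_hComp : ∀ {a b c a' b' c'} {f : C.Hor a b} {g : C.Hor b c} {j : C.Ver a a'}
    {k : C.Ver b b'} {l : C.Ver c c'} {f' : C.Hor a' b'} {g' : C.Hor b' c'}
    (α : C.Sq f j k f') (β : C.Sq g k l g'),
    HEq (F.smap (C.hCompSq α β)) (D.hCompSq (F.smap α) (F.smap β))
  smap_vComp : ∀ {a b c d e e'} {f : C.Hor a b} {j : C.Ver a c} {k : C.Ver b d}
    {g : C.Hor c d} {j' : C.Ver c e} {k' : C.Ver d e'} {h : C.Hor e e'}
    (α : C.Sq f j k g) (β : C.Sq g j' k' h),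
    HEq (F.smap (C.vCompSq α β)) (D.vCompSq (F.smap α) (F.smap β))

/-- The identity double functor. -/
def idF (C : DoubleCat) : DoubleFunctor C C where
  obj a := a
  hmap f := f
  vmap j := j
  smap s := s

/-- Composition of double functors (diagrammatic order). -/
def comp (F : DoubleFunctor C D) (G : DoubleFunctor D E) : DoubleFunctor C E where
  obj a := G.obj (F.obj a)
  hmap f := G.hmap (F.hmap f)
  vmap j := G.vmap (F.vmap j)
  smap s := G.smap (F.smap s)

end DoubleFunctor

/-- A horizontal natural transformation between double functors (data). -/
structure HorNatTrans {C D : DoubleCat} (F G : DoubleFunctor C D) where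
  app : ∀ a, D.Hor (F.obj a) (G.obj a)
  sq : ∀ {a b} (j : C.Ver a b), D.Sq (app a) (F.vmap j) (G.vmap j) (app b)

namespace HorNatTrans

variable {C D : DoubleCat} {F G : DoubleFunctor C D}

structure Laws (θ : HorNatTrans F G) : Prop where
  sq_id : ∀ a, HEq (θ.sq (C.vId a)) (D.idSqV (θ.app a))
  sq_comp : ∀ {a b c} (j : C.Ver a b) (j' : C.Ver b c),
    HEq (θ.sq (C.vComp j j')) (D.vCompSq (θ.sq j) (θ.sq j'))
  natural_hor : ∀ {a b} (f : C.Hor a b),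
    D.hComp (F.hmap f) (θ.app b) = D.hComp (θ.app a) (G.hmap f)
  natural : ∀ {a b c d} {f : C.Hor a b} {j : C.Ver a c} {k : C.Ver b d}
    {g : C.Hor c d} (α : C.Sq f j k g),
    HEq (D.hCompSq (F.smap α) (θ.sq k)) (D.hCompSq (θ.sq j) (G.smap α))

end HorNatTrans

/-- A vertical natural transformation between double functors (data plus laws). -/
structure VertNatTrans {C D : DoubleCat} (F G : DoubleFunctor C D) where
  app : ∀ a, D.Ver (F.obj a) (G.obj a)
  sq : ∀ {a b} (f : C.Hor a b), D.Sq (F.hmap f) (app a) (app b) (G.hmap f)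

namespace VertNatTrans

variable {C D : DoubleCat} {F G : DoubleFunctor C D}

structure Laws (θ : VertNatTrans F G) : Prop where
  sq_id : ∀ a, HEq (θ.sq (C.hId a)) (D.idSqH (θ.app a))
  sq_comp : ∀ {a b c} (f : C.Hor a b) (g : C.Hor b c),
    HEq (θ.sq (C.hComp f g)) (D.hCompSq (θ.sq f) (θ.sq g))
  natural_ver : ∀ {a b} (j : C.Ver a b),
    D.vComp (F.vmap j) (θ.app b) = D.vComp (θ.app a) (G.vmap j)
  natural : ∀ {a b c d} {f : C.Hor a b} {j : C.Ver a c} {k : C.Ver b d}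
    {g : C.Hor c d} (α : C.Sq f j k g),
    HEq (D.vCompSq (F.smap α) (θ.sq g)) (D.vCompSq (θ.sq f) (G.smap α))

end VertNatTrans

/-- A horizontal double adjunction `F ⊣ G` : an internal adjunction in the
2-category of double categories, double functors and horizontal natural
transformations, presented by unit and counit and triangle identities. -/
structure HorDoubleAdj {X A : DoubleCat} (F : DoubleFunctor X A) (G : DoubleFunctor A X) where
  F_laws : F.Laws
  G_laws : G.Laws
  unit : HorNatTrans (DoubleFunctor.idF X) (F.comp G)
  counit : HorNatTrans (G.comp F) (DoubleFunctor.idF A)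
  unit_laws : unit.Laws
  counit_laws : counit.Laws
  triangleF_obj : ∀ a, A.hComp (F.hmap (unit.app a)) (counit.app (F.obj a)) = A.hId (F.obj a)
  triangleF_sq : ∀ {a b} (j : X.Ver a b),
    HEq (A.hCompSq (F.smap (unit.sq j)) (counit.sq (F.vmap j))) (A.idSqH (F.vmap j))
  triangleG_obj : ∀ a, X.hComp (unit.app (G.obj a)) (G.hmap (counit.app a)) = X.hId (G.obj a)
  triangleG_sq : ∀ {a b} (k : A.Ver a b),
    HEq (X.hCompSq (unit.sq (G.vmap k)) (G.smap (counit.sq k))) (X.idSqH (G.vmap k))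

/-- A vertical double adjunction `F ⊣ G` (F vertical left double adjoint). -/
structure VertDoubleAdj {X A : DoubleCat} (F : DoubleFunctor X A) (G : DoubleFunctor A X) where
  F_laws : F.Laws
  G_laws : G.Laws
  unit : VertNatTrans (DoubleFunctor.idF X) (F.comp G)
  counit : VertNatTrans (G.comp F) (DoubleFunctor.idF A)
  unit_laws : unit.Laws
  counit_laws : counit.Laws
  triangleF_obj : ∀ a, A.vComp (F.vmap (unit.app a)) (counit.app (F.obj a)) = A.vId (F.obj a)
  triangleF_sq : ∀ {a b} (f : X.Hor a b),
    HEq (A.vCompSq (F.smap (unit.sq f)) (counit.sq (F.hmap f))) (A.idSqV (F.hmap f))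
  triangleG_obj : ∀ a, X.vComp (unit.app (G.obj a)) (G.vmap (counit.app a)) = X.vId (G.obj a)
  triangleG_sq : ∀ {a b} (g : A.Hor a b),
    HEq (X.vCompSq (unit.sq (G.hmap g)) (G.smap (counit.sq g))) (X.idSqV (G.hmap g))

namespace DoubleCat

variable {D : DoubleCat}

/-- The set of squares with fixed left vertical boundary `j` and fixed right
vertical boundary `k` (with varying top and bottom). -/
def SqSet (D : DoubleCat) {a b c d : D.Obj} (j : D.Ver a c) (k : D.Ver b d) :
    Type _ :=
  Σ (f : D.Hor a b) (g : D.Hor c d), D.Sq f j k g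

/-- Horizontal composition of elements of `SqSet`. -/
def SqSet.hcomp {a b c a' b' c' : D.Obj} {j : D.Ver a a'} {k : D.Ver b b'}
    {l : D.Ver c c'} (x : D.SqSet j k) (y : D.SqSet k l) : D.SqSet j l :=
  ⟨D.hComp x.1 y.1, D.hComp x.2.1 y.2.1, D.hCompSq x.2.2 y.2.2⟩

/-- Vertical composition of elements of `SqSet` (given that the bottom of the
first is the top of the second). -/
def SqSet.vcomp {a b c d e e' : D.Obj} {j : D.Ver a c} {k : D.Ver b d}
    {j' : D.Ver c e} {k' : D.Ver d e'} (x : D.SqSet j k) (y : D.SqSet j' k')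
    (h : x.2.1 = y.1) : D.SqSet (D.vComp j j') (D.vComp k k') :=
  ⟨x.1, y.2.1, D.vCompSq x.2.2 (D.recast h.symm rfl rfl rfl y.2.2)⟩

end DoubleCat

namespace DoubleFunctor

variable {C D : DoubleCat}

/-- The image of a `SqSet` element under a double functor. -/
def mapSqSet (F : DoubleFunctor C D) {a b c d : C.Obj} {j : C.Ver a c}
    {k : C.Ver b d} (x : C.SqSet j k) : D.SqSet (F.vmap j) (F.vmap k) :=
  ⟨F.hmap x.1, F.hmap x.2.1, F.smap x.2.2⟩

/-- Post-composition with a square `μ` from a vertical morphism `j` to `S`. -/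
def inducedMap (S : DoubleFunctor D C) {a a' : C.Obj} {r r' : D.Obj}
    {j : C.Ver a a'} {k : D.Ver r r'} (μ : C.SqSet j (S.vmap k))
    {d d' : D.Obj} (l : D.Ver d d') (x : D.SqSet k l) : C.SqSet j (S.vmap l) :=
  DoubleCat.SqSet.hcomp μ (S.mapSqSet x)

/-- `μ` is a (horizontally) universal square from the vertical morphism `j`
to the double functor `S`. -/
def IsUniversalFrom (S : DoubleFunctor D C) {a a' : C.Obj} {r r' : D.Obj}
    {j : C.Ver a a'} {k : D.Ver r r'} (μ : C.SqSet j (S.vmap k)) : Prop :=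
  ∀ {d d' : D.Obj} (l : D.Ver d d'), Function.Bijective (S.inducedMap μ l)

end DoubleFunctor
namespace TwoCat

/-- Transport a 1-cell along equalities of objects. -/
def castHom (K : TwoCat) {a a' b b' : K.Obj} (h1 : a = a') (h2 : b = b')
    (f : K.Hom a b) : K.Hom a' b' := by
  cases h1; cases h2; exact f

/-- The double category `ℍ K` with horizontal 2-category `K` and only trivial
vertical morphisms. -/
def HDouble (K : TwoCat) : DoubleCat where
  Obj := K.Obj
  Hor := K.Hom
  Ver a b := PLift (a = b)
  Sq {a b c d} f j k g := K.Cell f (K.castHom j.down.symm k.down.symm g)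
  hId := K.hid
  hComp := K.hcomp
  vId a := ⟨rfl⟩
  vComp j k := ⟨j.down.trans k.down⟩
  hId_comp := K.hid_comp
  hComp_id := K.hcomp_id
  hAssoc := K.hassoc
  vId_comp j := rfl
  vComp_id j := rfl
  vAssoc j k l := rfl
  idSqV f := K.cid f
  idSqH j := by
    obtain ⟨hj⟩ := j; cases hj; exact K.cid (K.hid _)
  hCompSq {a b c a' b' c'} {f g j k l f' g'} α β := by
    obtain ⟨hj⟩ := j; obtain ⟨hk⟩ := k; obtain ⟨hl⟩ := l
    cases hj; cases hk; cases hl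
    exact K.vcomp (K.hcomp₂ α (K.cid g)) (K.hcomp₂ (K.cid f') β)
  vCompSq {a b c d e e'} {f j k g j' k' h} α β := by
    obtain ⟨hj⟩ := j; obtain ⟨hk⟩ := k; obtain ⟨hj'⟩ := j'; obtain ⟨hk'⟩ := k'
    cases hj; cases hk; cases hj'; cases hk'
    exact K.vcomp α β

end TwoCat

/-- A 2-functor (data).  The strict preservation laws are collected in
`TwoFunctor.Laws`. -/
structure TwoFunctor (K L : TwoCat) where
  obj : K.Obj → L.Obj
  hmap : ∀ {a b}, K.Hom a b → L.Hom (obj a) (obj b)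
  cmap : ∀ {a b} {f g : K.Hom a b}, K.Cell f g → L.Cell (hmap f) (hmap g)

namespace TwoFunctor

variable {K L M : TwoCat}

structure Laws (F : TwoFunctor K L) : Prop where
  hmap_id : ∀ a, F.hmap (K.hid a) = L.hid (F.obj a)
  hmap_comp : ∀ {a b c} (f : K.Hom a b) (g : K.Hom b c),
    F.hmap (K.hcomp f g) = L.hcomp (F.hmap f) (F.hmap g)
  cmap_cid : ∀ {a b} (f : K.Hom a b), F.cmap (K.cid f) = L.cid (F.hmap f)
  cmap_vcomp : ∀ {a b} {f g h : K.Hom a b} (α : K.Cell f g) (β : K.Cell g h),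
    F.cmap (K.vcomp α β) = L.vcomp (F.cmap α) (F.cmap β)
  cmap_hcomp₂ : ∀ {a b c} {f f' : K.Hom a b} {g g' : K.Hom b c}
    (α : K.Cell f f') (β : K.Cell g g'),
    HEq (F.cmap (K.hcomp₂ α β)) (L.hcomp₂ (F.cmap α) (F.cmap β))

/-- The identity 2-functor. -/
def idF (K : TwoCat) : TwoFunctor K K := ⟨fun a => a, fun f => f, fun α => α⟩

/-- Composition of 2-functors (diagrammatic order). -/
def comp (F : TwoFunctor K L) (G : TwoFunctor L M) : TwoFunctor K M :=
  ⟨fun a => G.obj (F.obj a), fun f => G.hmap (F.hmap f), fun α => G.cmap (F.cmap α)⟩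

end TwoFunctor

/-- The double functor `ℍ S : ℍ K → ℍ L` induced by a 2-functor `S`. -/
def TwoFunctor.HFun {K L : TwoCat} (S : TwoFunctor K L) :
    DoubleFunctor K.HDouble L.HDouble where
  obj := S.obj
  hmap := S.hmap
  vmap j := ⟨congrArg S.obj j.down⟩
  smap {a b c d} {f j k g} α := by
    obtain ⟨hj⟩ := j; obtain ⟨hk⟩ := k
    cases hj; cases hk
    exact S.cmap α
/-- Let `S : K' → K` be a 2-functor and `u : C → SR` a
morphism in `K`.  The vertical identity square `i^v_u` in `ℍ K` is a
horizontally universal square from the vertical identity `1^v_C` to the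
induced double functor `ℍ S` if and only if for every object `D` of `K'`,
whiskering with `u` is an isomorphism of categories
`K'(R,D) ≅ K(C,SD)` (i.e. `u` is 2-universal). -/
theorem identity_square_universal_iff_two_universal
    {K' K : TwoCat} (hK' : K'.Laws) (hK : K.Laws)
    (S : TwoFunctor K' K) (hS : S.Laws)
    (C : K.Obj) (R : K'.Obj) (u : K.Hom C (S.obj R))
    (μ : (TwoCat.HDouble K).Sq u ((TwoCat.HDouble K).vId C)
        (S.HFun.vmap ((TwoCat.HDouble K').vId R)) u)
    (hμ : HEq μ ((TwoCat.HDouble K).idSqV u)) :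
    S.HFun.IsUniversalFrom
        (j := (TwoCat.HDouble K).vId C) (k := (TwoCat.HDouble K').vId R)
        ⟨u, u, μ⟩ ↔
      ∀ D : K'.Obj,
        Function.Bijective (fun f' : K'.Hom R D => K.hcomp u (S.hmap f')) ∧
        Function.Bijective
          (fun p : Σ f' g' : K'.Hom R D, K'.Cell f' g' =>
            (⟨K.hcomp u (S.hmap p.1), K.hcomp u (S.hmap p.2.1),
              K.hcomp₂ (K.cid u) (S.cmap p.2.2)⟩ :
              Σ f g : K.Hom C (S.obj D), K.Cell f g)) := by

  have hmu : μ = K.cid u := eq_of_heq hμ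
  subst hmu
  have key : ∀ (D : K'.Obj),
      (S.HFun.inducedMap (j := (TwoCat.HDouble K).vId C)
        (k := (TwoCat.HDouble K').vId R) ⟨u, u, K.cid u⟩
        ((TwoCat.HDouble K').vId D))
      = (fun p : Σ f' g' : K'.Hom R D, K'.Cell f' g' =>
          (⟨K.hcomp u (S.hmap p.1), K.hcomp u (S.hmap p.2.1),
            K.hcomp₂ (K.cid u) (S.cmap p.2.2)⟩ :
            Σ f g : K.Hom C (S.obj D), K.Cell f g)) := by
    intro D
    funext x
    obtain ⟨f, g, α⟩ := x
    show (⟨K.hcomp u (S.hmap f), K.hcomp u (S.hmap g),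
      K.vcomp (K.hcomp₂ (K.cid u) (K.cid (S.hmap f)))
        (K.hcomp₂ (K.cid u) (S.cmap α))⟩ :
        Σ f g : K.Hom C (S.obj D), K.Cell f g) = _
    rw [hK.hcomp₂_cid, hK.cid_vcomp]
  constructor
  · intro h D
    have hb := h ((TwoCat.HDouble K').vId D)
    rw [key D] at hb
    refine ⟨⟨?_, ?_⟩, hb⟩
    · intro f' g' hfg
      dsimp only at hfg
      have h1 : (⟨K.hcomp u (S.hmap f'), K.hcomp u (S.hmap f'),
          K.hcomp₂ (K.cid u) (S.cmap (K'.cid f'))⟩ :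
          Σ f g : K.Hom C (S.obj D), K.Cell f g)
          = ⟨K.hcomp u (S.hmap g'), K.hcomp u (S.hmap g'),
          K.hcomp₂ (K.cid u) (S.cmap (K'.cid g'))⟩ := by
        rw [hS.cmap_cid, hS.cmap_cid, hK.hcomp₂_cid, hK.hcomp₂_cid, hfg]
      have h2 := hb.injective (a₁ := ⟨f', f', K'.cid f'⟩) (a₂ := ⟨g', g', K'.cid g'⟩) h1
      exact congrArg Sigma.fst h2
    · intro f
      obtain ⟨p, hp⟩ := hb.surjective ⟨f, f, K.cid f⟩
      exact ⟨p.1, congrArg Sigma.fst hp⟩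
  · intro h d d' l
    obtain ⟨hl⟩ := l
    cases hl
    show Function.Bijective (S.HFun.inducedMap (j := (TwoCat.HDouble K).vId C)
        (k := (TwoCat.HDouble K').vId R) ⟨u, u, K.cid u⟩
        ((TwoCat.HDouble K').vId d))
    rw [key d]
    exact (h d).2
end

section
/- Let F : X → A and G : A → X be double functors. Then F ⊣ G is a horizontal double adjunction if and only if there exists a horizontal natural transformation η : 1_X ⇒ GF such that for every vertical morphism j of X, the square η_j is horizontally universal from j to G. -/
set_option linter.unusedVariables false

/-! Core definitions: strict 2-categories and strict double categories. -/

universe u v w x u' v' w' x' u'' v'' w'' x''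

namespace Adj6

open DoubleCat DoubleFunctor

/-! ### HEq toolkit -/

theorem recast_heq (D : DoubleCat) {a b c d : D.Obj} {f f' : D.Hor a b}
    {j j' : D.Ver a c} {k k' : D.Ver b d} {g g' : D.Hor c d}
    (hf : f = f') (hj : j = j') (hk : k = k') (hg : g = g') (α : D.Sq f j k g) :
    HEq (D.recast hf hj hk hg α) α := by
  subst hf; subst hj; subst hk; subst hg; rfl

theorem hCompSq_congr (D : DoubleCat) {a b c a' b' c' : D.Obj}
    {f₁ f₂ : D.Hor a b} {g₁ g₂ : D.Hor b c} {j₁ j₂ : D.Ver a a'} {k₁ k₂ : D.Ver b b'}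
    {l₁ l₂ : D.Ver c c'} {f'₁ f'₂ : D.Hor a' b'} {g'₁ g'₂ : D.Hor b' c'}
    {α₁ : D.Sq f₁ j₁ k₁ f'₁} {α₂ : D.Sq f₂ j₂ k₂ f'₂}
    {β₁ : D.Sq g₁ k₁ l₁ g'₁} {β₂ : D.Sq g₂ k₂ l₂ g'₂}
    (hf : f₁ = f₂) (hg : g₁ = g₂) (hj : j₁ = j₂) (hk : k₁ = k₂) (hl : l₁ = l₂)
    (hf' : f'₁ = f'₂) (hg' : g'₁ = g'₂) (hα : HEq α₁ α₂) (hβ : HEq β₁ β₂) :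
    HEq (D.hCompSq α₁ β₁) (D.hCompSq α₂ β₂) := by
  subst hf; subst hg; subst hj; subst hk; subst hl; subst hf'; subst hg'
  cases hα; cases hβ; rfl

theorem vCompSq_congr (D : DoubleCat) {a b c d e e' : D.Obj}
    {f₁ f₂ : D.Hor a b} {g₁ g₂ : D.Hor c d} {h₁ h₂ : D.Hor e e'}
    {j₁ j₂ : D.Ver a c} {k₁ k₂ : D.Ver b d} {j'₁ j'₂ : D.Ver c e} {k'₁ k'₂ : D.Ver d e'}
    {α₁ : D.Sq f₁ j₁ k₁ g₁} {α₂ : D.Sq f₂ j₂ k₂ g₂}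
    {β₁ : D.Sq g₁ j'₁ k'₁ h₁} {β₂ : D.Sq g₂ j'₂ k'₂ h₂}
    (hf : f₁ = f₂) (hg : g₁ = g₂) (hh : h₁ = h₂) (hj : j₁ = j₂) (hk : k₁ = k₂)
    (hj' : j'₁ = j'₂) (hk' : k'₁ = k'₂) (hα : HEq α₁ α₂) (hβ : HEq β₁ β₂) :
    HEq (D.vCompSq α₁ β₁) (D.vCompSq α₂ β₂) := by
  subst hf; subst hg; subst hh; subst hj; subst hk; subst hj'; subst hk'
  cases hα; cases hβ; rfl

theorem smap_congr {C D : DoubleCat} (F : DoubleFunctor C D) {a b c d : C.Obj}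
    {f₁ f₂ : C.Hor a b} {j₁ j₂ : C.Ver a c} {k₁ k₂ : C.Ver b d} {g₁ g₂ : C.Hor c d}
    {s₁ : C.Sq f₁ j₁ k₁ g₁} {s₂ : C.Sq f₂ j₂ k₂ g₂}
    (hf : f₁ = f₂) (hj : j₁ = j₂) (hk : k₁ = k₂) (hg : g₁ = g₂) (hs : HEq s₁ s₂) :
    HEq (F.smap s₁) (F.smap s₂) := by
  subst hf; subst hj; subst hk; subst hg; cases hs; rfl

theorem sq_congr {C D : DoubleCat} {F G : DoubleFunctor C D} (θ : HorNatTrans F G)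
    {a b : C.Obj} {j j' : C.Ver a b} (h : j = j') : HEq (θ.sq j) (θ.sq j') := by
  subst h; rfl

theorem idSqH_congr (D : DoubleCat) {a b : D.Obj} {j j' : D.Ver a b} (h : j = j') :
    HEq (D.idSqH j) (D.idSqH j') := by subst h; rfl

/-! ### Eckmann–Hilton: the two double identities agree -/

theorem idSqH_vId {D : DoubleCat} (hD : D.Laws) (a : D.Obj) :
    D.idSqH (D.vId a) = D.idSqV (D.hId a) := by
  have key := hD.interchange (D.idSqH (D.vId a)) (D.idSqV (D.hId a))
    (D.idSqV (D.hId a)) (D.idSqH (D.vId a))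
  have l1 : HEq (D.hCompSq (D.vCompSq (D.idSqH (D.vId a)) (D.idSqV (D.hId a)))
      (D.vCompSq (D.idSqV (D.hId a)) (D.idSqH (D.vId a)))) (D.idSqH (D.vId a)) :=
    (hCompSq_congr D rfl rfl (D.vId_comp _) (D.vId_comp _) (D.vId_comp _) rfl rfl
      (hD.vComp_idSqV _) (hD.idSqV_vComp _)).trans (hD.idSqH_hComp _)
  have l2 : HEq (D.vCompSq (D.hCompSq (D.idSqH (D.vId a)) (D.idSqV (D.hId a)))
      (D.hCompSq (D.idSqV (D.hId a)) (D.idSqH (D.vId a)))) (D.idSqV (D.hId a)) :=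
    (vCompSq_congr D (D.hId_comp _) (D.hId_comp _) (D.hId_comp _) rfl rfl rfl rfl
      (hD.idSqH_hComp _) (hD.hComp_idSqH _)).trans (hD.idSqV_vComp _)
  exact eq_of_heq ((l1.symm.trans (heq_of_eq key)).trans l2)

/-! ### SqSet calculus -/

theorem sqset_ext {D : DoubleCat} {a b c d : D.Obj} {j : D.Ver a c} {k : D.Ver b d} :
    ∀ {x y : D.SqSet j k}, x.1 = y.1 → x.2.1 = y.2.1 → HEq x.2.2 y.2.2 → x = y
  | ⟨f, g, s⟩, ⟨f', g', s'⟩, h1, h2, h3 => by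
    obtain rfl : f = f' := h1
    obtain rfl : g = g' := h2
    obtain rfl : s = s' := eq_of_heq h3
    rfl

theorem sqset_fst_eq {D : DoubleCat} {a b c d : D.Obj} {j : D.Ver a c} {k : D.Ver b d}
    {x y : D.SqSet j k} (h : x = y) : x.1 = y.1 := by rw [h]

theorem sqset_snd1_eq {D : DoubleCat} {a b c d : D.Obj} {j : D.Ver a c} {k : D.Ver b d}
    {x y : D.SqSet j k} (h : x = y) : x.2.1 = y.2.1 := by rw [h]

theorem sqset_snd_heq {D : DoubleCat} {a b c d : D.Obj} {j : D.Ver a c} {k : D.Ver b d}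
    {x y : D.SqSet j k} (h : x = y) : HEq x.2.2 y.2.2 := by subst h; rfl

def idS (D : DoubleCat) {a c : D.Obj} (j : D.Ver a c) : D.SqSet j j :=
  ⟨D.hId a, D.hId c, D.idSqH j⟩

theorem hcomp_assoc {D : DoubleCat} (hD : D.Laws) {a₁ a₂ a₃ a₄ b₁ b₂ b₃ b₄ : D.Obj}
    {j : D.Ver a₁ b₁} {k : D.Ver a₂ b₂} {l : D.Ver a₃ b₃} {m : D.Ver a₄ b₄}
    (x : D.SqSet j k) (y : D.SqSet k l) (z : D.SqSet l m) :
    (x.hcomp y).hcomp z = x.hcomp (y.hcomp z) :=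
  sqset_ext (D.hAssoc _ _ _) (D.hAssoc _ _ _) (hD.hCompSq_assoc _ _ _)

theorem idS_hcomp {D : DoubleCat} (hD : D.Laws) {a b c d : D.Obj}
    {j : D.Ver a c} {k : D.Ver b d} (x : D.SqSet j k) :
    (idS D j).hcomp x = x :=
  sqset_ext (D.hId_comp _) (D.hId_comp _) (hD.idSqH_hComp _)

theorem hcomp_idS {D : DoubleCat} (hD : D.Laws) {a b c d : D.Obj}
    {j : D.Ver a c} {k : D.Ver b d} (x : D.SqSet j k) :
    x.hcomp (idS D k) = x :=
  sqset_ext (D.hComp_id _) (D.hComp_id _) (hD.hComp_idSqH _)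

theorem map_hcomp {C D : DoubleCat} (F : DoubleFunctor C D) (hF : F.Laws)
    {a b c a' b' c' : C.Obj} {j : C.Ver a a'} {k : C.Ver b b'} {l : C.Ver c c'}
    (x : C.SqSet j k) (y : C.SqSet k l) :
    F.mapSqSet (x.hcomp y) = (F.mapSqSet x).hcomp (F.mapSqSet y) :=
  sqset_ext (hF.hmap_comp _ _) (hF.hmap_comp _ _) (hF.smap_hComp _ _)

theorem map_idS {C D : DoubleCat} (F : DoubleFunctor C D) (hF : F.Laws)
    {a c : C.Obj} (j : C.Ver a c) :
    F.mapSqSet (idS C j) = idS D (F.vmap j) :=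
  sqset_ext (hF.hmap_id _) (hF.hmap_id _) (hF.smap_idSqH _)

/-! ### unit / counit as SqSet elements -/

def etaS {X A : DoubleCat} (F : DoubleFunctor X A) (G : DoubleFunctor A X)
    (η : HorNatTrans (DoubleFunctor.idF X) (F.comp G)) {p q : X.Obj} (i : X.Ver p q) :
    X.SqSet i (G.vmap (F.vmap i)) := ⟨η.app p, η.app q, η.sq i⟩

def epsS {X A : DoubleCat} (F : DoubleFunctor X A) (G : DoubleFunctor A X)
    (ε : HorNatTrans (G.comp F) (DoubleFunctor.idF A)) {p q : A.Obj} (k : A.Ver p q) :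
    A.SqSet (F.vmap (G.vmap k)) k := ⟨ε.app p, ε.app q, ε.sq k⟩

theorem natetaS {X A : DoubleCat} (F : DoubleFunctor X A) (G : DoubleFunctor A X)
    (η : HorNatTrans (DoubleFunctor.idF X) (F.comp G)) (hη : η.Laws)
    {p q r r' : X.Obj} {i : X.Ver p q} {i' : X.Ver r r'} (y : X.SqSet i i') :
    SqSet.hcomp y (etaS F G η i') = SqSet.hcomp (etaS F G η i) (G.mapSqSet (F.mapSqSet y)) :=
  sqset_ext (hη.natural_hor _) (hη.natural_hor _) (hη.natural _)

theorem natepsS {X A : DoubleCat} (F : DoubleFunctor X A) (G : DoubleFunctor A X)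
    (ε : HorNatTrans (G.comp F) (DoubleFunctor.idF A)) (hε : ε.Laws)
    {p q r r' : A.Obj} {m : A.Ver p q} {m' : A.Ver r r'} (z : A.SqSet m m') :
    SqSet.hcomp (F.mapSqSet (G.mapSqSet z)) (epsS F G ε m') = SqSet.hcomp (epsS F G ε m) z :=
  sqset_ext (hε.natural_hor _) (hε.natural_hor _) (hε.natural _)

end Adj6

namespace Adj6
theorem idSqV_congr (D : DoubleCat) {a b : D.Obj} {f f' : D.Hor a b} (h : f = f') :
    HEq (D.idSqV f) (D.idSqV f') := by subst h; rfl
end Adj6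
namespace Adj6

open DoubleCat DoubleFunctor

/-- Injectivity of postcomposition with the unit on horizontal morphisms. -/
theorem hor_inj {X A : DoubleCat} (hX : X.Laws)
    (F : DoubleFunctor X A) (G : DoubleFunctor A X) (hF : F.Laws) (hG : G.Laws)
    (η : HorNatTrans (DoubleFunctor.idF X) (F.comp G)) (hη : η.Laws)
    (inj : ∀ {p q : X.Obj} (j : X.Ver p q) {d d' : A.Obj} (l : A.Ver d d')
      (x y : A.SqSet (F.vmap j) l),
      SqSet.hcomp (etaS F G η j) (G.mapSqSet x) = SqSet.hcomp (etaS F G η j) (G.mapSqSet y) →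
      x = y)
    {c : X.Obj} {d : A.Obj} (h h' : A.Hor (F.obj c) d)
    (hh : X.hComp (η.app c) (G.hmap h) = X.hComp (η.app c) (G.hmap h')) : h = h' := by
  have hv : A.vId (F.obj c) = F.vmap (X.vId c) := (hF.vmap_id c).symm
  have hk2 : G.vmap (F.vmap (X.vId c)) = X.vId (G.obj (F.obj c)) := by
    rw [hF.vmap_id, hG.vmap_id]
  have c2 : ∀ (h₀ : A.Hor (F.obj c) d), HEq
      (X.hCompSq (η.sq (X.vId c)) (G.smap (A.recast rfl hv rfl rfl (A.idSqV h₀))))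
      (X.idSqV (X.hComp (η.app c) (G.hmap h₀))) := by
    intro h₀
    refine HEq.trans (hCompSq_congr X rfl rfl (rfl) hk2 (hG.vmap_id d) rfl rfl
      (hη.sq_id c)
      ((smap_congr G rfl hv.symm rfl rfl (recast_heq A rfl hv rfl rfl _)).trans
        (hG.smap_idSqV h₀))) ?_
    exact heq_of_eq (hX.idSqV_hComp (η.app c) (G.hmap h₀))
  have e1 : (⟨h, h, A.recast rfl hv rfl rfl (A.idSqV h)⟩ :
        A.SqSet (F.vmap (X.vId c)) (A.vId d))
      = ⟨h', h', A.recast rfl hv rfl rfl (A.idSqV h')⟩ := by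
    refine inj (X.vId c) (A.vId d) _ _ (sqset_ext hh hh ?_)
    show HEq (X.hCompSq (η.sq (X.vId c)) (G.smap (A.recast rfl hv rfl rfl (A.idSqV h))))
      (X.hCompSq (η.sq (X.vId c)) (G.smap (A.recast rfl hv rfl rfl (A.idSqV h'))))
    refine ((c2 h).trans ?_).trans (c2 h').symm
    exact idSqV_congr X hh
  exact congrArg Sigma.fst e1

/-- Build a horizontal double adjunction from a unit and a counit-like family
satisfying the G-triangle identity, with injectivity of the induced maps. -/
theorem mk_adj2 {X A : DoubleCat} (hX : X.Laws) (hA : A.Laws)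
    (F : DoubleFunctor X A) (G : DoubleFunctor A X) (hF : F.Laws) (hG : G.Laws)
    (η : HorNatTrans (DoubleFunctor.idF X) (F.comp G)) (hη : η.Laws)
    (ε : HorNatTrans (G.comp F) (DoubleFunctor.idF A))
    (hU : ∀ {p q : A.Obj} (k : A.Ver p q),
      SqSet.hcomp (etaS F G η (G.vmap k)) (G.mapSqSet (epsS F G ε k)) = idS X (G.vmap k))
    (inj : ∀ {p q : X.Obj} (j : X.Ver p q) {d d' : A.Obj} (l : A.Ver d d')
      (x y : A.SqSet (F.vmap j) l),
      SqSet.hcomp (etaS F G η j) (G.mapSqSet x) = SqSet.hcomp (etaS F G η j) (G.mapSqSet y) →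
      x = y) :
    Nonempty (HorDoubleAdj F G) := by
  have tg1 : ∀ p : A.Obj, X.hComp (η.app (G.obj p)) (G.hmap (ε.app p)) = X.hId (G.obj p) :=
    fun p => sqset_fst_eq (hU (A.vId p))
  have tgsq : ∀ {p q : A.Obj} (k : A.Ver p q),
      HEq (X.hCompSq (η.sq (G.vmap k)) (G.smap (ε.sq k))) (X.idSqH (G.vmap k)) :=
    fun k => sqset_snd_heq (hU k)
  have nhη : ∀ {p q : X.Obj} (f : X.Hor p q),
      X.hComp f (η.app q) = X.hComp (η.app p) (G.hmap (F.hmap f)) :=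
    fun f => hη.natural_hor f
  -- horizontal naturality of the counit
  have nat_hor : ∀ {p q : A.Obj} (g : A.Hor p q),
      A.hComp (F.hmap (G.hmap g)) (ε.app q) = A.hComp (ε.app p) g := by
    intro p q g
    apply hor_inj hX F G hF hG η hη inj
    erw [hG.hmap_comp, hG.hmap_comp, ← X.hAssoc, ← X.hAssoc, ← nhη (G.hmap g), tg1 p,
      X.hAssoc, tg1 q, X.hComp_id]
    exact (X.hId_comp _).symm
  -- the F-triangle identity
  have TFs : ∀ {p q : X.Obj} (j : X.Ver p q),
      SqSet.hcomp (F.mapSqSet (etaS F G η j)) (epsS F G ε (F.vmap j)) = idS A (F.vmap j) := by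
    intro p q j
    apply inj j (F.vmap j)
    rw [map_hcomp G hG, ← hcomp_assoc hX, ← natetaS F G η hη (etaS F G η j),
      hcomp_assoc hX, hU (F.vmap j), hcomp_idS hX, map_idS G hG, hcomp_idS hX]
  -- naturality of the counit on squares
  have nateps : ∀ {p q r r' : A.Obj} {m : A.Ver p q} {m' : A.Ver r r'} (z : A.SqSet m m'),
      SqSet.hcomp (F.mapSqSet (G.mapSqSet z)) (epsS F G ε m') = SqSet.hcomp (epsS F G ε m) z := by
    intro p q r r' m m' z
    apply inj (G.vmap m) m'
    rw [map_hcomp G hG, map_hcomp G hG, ← hcomp_assoc hX, ← hcomp_assoc hX,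
      ← natetaS F G η hη (G.mapSqSet z), hcomp_assoc hX, hU m', hcomp_idS hX, hU m,
      idS_hcomp hX]
  -- counit compatibility with vertical identities
  have sq_id' : ∀ p : A.Obj, HEq (ε.sq (A.vId p)) (A.idSqV (ε.app p)) := by
    intro p
    have hv : A.vId (F.obj (G.obj p)) = F.vmap (G.vmap (A.vId p)) := by
      rw [hG.vmap_id, hF.vmap_id]
    have hk2 : G.vmap (F.vmap (G.vmap (A.vId p))) = X.vId (G.obj (F.obj (G.obj p))) := by
      rw [hG.vmap_id, hF.vmap_id, hG.vmap_id]
    have hE : SqSet.hcomp (etaS F G η (G.vmap (A.vId p)))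
        (G.mapSqSet (⟨ε.app p, ε.app p, A.recast rfl hv rfl rfl (A.idSqV (ε.app p))⟩ :
          A.SqSet (F.vmap (G.vmap (A.vId p))) (A.vId p)))
        = idS X (G.vmap (A.vId p)) := by
      refine sqset_ext (tg1 p) (tg1 p) ?_
      refine HEq.trans (hCompSq_congr X rfl rfl (hG.vmap_id p) hk2 (hG.vmap_id p) rfl rfl
        ((sq_congr η (hG.vmap_id p)).trans (hη.sq_id (G.obj p)))
        ((smap_congr G rfl hv.symm rfl rfl (recast_heq A rfl hv rfl rfl _)).trans
          (hG.smap_idSqV (ε.app p)))) ?_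
      refine HEq.trans (heq_of_eq (hX.idSqV_hComp (η.app (G.obj p)) (G.hmap (ε.app p)))) ?_
      refine HEq.trans (idSqV_congr X (tg1 p)) ?_
      refine HEq.trans (heq_of_eq (idSqH_vId hX (G.obj p)).symm) ?_
      exact idSqH_congr X (hG.vmap_id p).symm
    have e2 : epsS F G ε (A.vId p)
        = ⟨ε.app p, ε.app p, A.recast rfl hv rfl rfl (A.idSqV (ε.app p))⟩ :=
      inj (G.vmap (A.vId p)) (A.vId p) _ _ (by rw [hU (A.vId p), hE])
    refine HEq.trans (sqset_snd_heq e2) ?_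
    show HEq (A.recast rfl hv rfl rfl (A.idSqV (ε.app p))) (A.idSqV (ε.app p))
    exact recast_heq A rfl hv rfl rfl _
  -- counit compatibility with vertical composition
  have sq_comp' : ∀ {p q r : A.Obj} (k : A.Ver p q) (k' : A.Ver q r),
      HEq (ε.sq (A.vComp k k')) (A.vCompSq (ε.sq k) (ε.sq k')) := by
    intro p q r k k'
    have hv : A.vComp (F.vmap (G.vmap k)) (F.vmap (G.vmap k'))
        = F.vmap (G.vmap (A.vComp k k')) := by
      rw [hG.vmap_comp, hF.vmap_comp]
    have hk2 : G.vmap (F.vmap (G.vmap (A.vComp k k')))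
        = X.vComp (G.vmap (F.vmap (G.vmap k))) (G.vmap (F.vmap (G.vmap k'))) := by
      rw [hG.vmap_comp k k', hF.vmap_comp, hG.vmap_comp]
    have hE : SqSet.hcomp (etaS F G η (G.vmap (A.vComp k k')))
        (G.mapSqSet (⟨ε.app p, ε.app r,
          A.recast rfl hv rfl rfl (A.vCompSq (ε.sq k) (ε.sq k'))⟩ :
          A.SqSet (F.vmap (G.vmap (A.vComp k k'))) (A.vComp k k')))
        = idS X (G.vmap (A.vComp k k')) := by
      refine sqset_ext (tg1 p) (tg1 r) ?_
      refine HEq.trans (hCompSq_congr X rfl rfl (hG.vmap_comp k k') hk2 (hG.vmap_comp k k')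
        rfl rfl
        ((sq_congr η (hG.vmap_comp k k')).trans (hη.sq_comp (G.vmap k) (G.vmap k')))
        ((smap_congr G rfl hv.symm rfl rfl (recast_heq A rfl hv rfl rfl _)).trans
          (hG.smap_vComp (ε.sq k) (ε.sq k')))) ?_
      refine HEq.trans (heq_of_eq (hX.interchange _ _ _ _)) ?_
      refine HEq.trans (vCompSq_congr X (tg1 p) (tg1 q) (tg1 r) rfl rfl rfl rfl
        (tgsq k) (tgsq k')) ?_
      refine HEq.trans (heq_of_eq (hX.idSqH_vComp (G.vmap k) (G.vmap k'))) ?_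
      exact idSqH_congr X (hG.vmap_comp k k').symm
    have e3 : epsS F G ε (A.vComp k k')
        = ⟨ε.app p, ε.app r, A.recast rfl hv rfl rfl (A.vCompSq (ε.sq k) (ε.sq k'))⟩ :=
      inj (G.vmap (A.vComp k k')) (A.vComp k k') _ _ (by rw [hU (A.vComp k k'), hE])
    refine HEq.trans (sqset_snd_heq e3) ?_
    show HEq (A.recast rfl hv rfl rfl (A.vCompSq (ε.sq k) (ε.sq k')))
      (A.vCompSq (ε.sq k) (ε.sq k'))
    exact recast_heq A rfl hv rfl rfl _
  refine ⟨⟨hF, hG, η, ε, hη,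
    ⟨sq_id', sq_comp', nat_hor, fun {a b c d} {f} {j} {kk} {g} α =>
      sqset_snd_heq (nateps (⟨f, g, α⟩ : A.SqSet j kk))⟩,
    fun a => sqset_fst_eq (TFs (X.vId a)),
    fun j => sqset_snd_heq (TFs j),
    tg1,
    tgsq⟩⟩

end Adj6
namespace Adj6

open DoubleCat DoubleFunctor

/-- Build a horizontal double adjunction from a unit all of whose components
are universal squares. -/
theorem mk_adj {X A : DoubleCat} (hX : X.Laws) (hA : A.Laws)
    (F : DoubleFunctor X A) (G : DoubleFunctor A X) (hF : F.Laws) (hG : G.Laws)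
    (η : HorNatTrans (DoubleFunctor.idF X) (F.comp G)) (hη : η.Laws)
    (U : ∀ {p q : A.Obj} (k : A.Ver p q), A.SqSet (F.vmap (G.vmap k)) k)
    (hU : ∀ {p q : A.Obj} (k : A.Ver p q),
      SqSet.hcomp (etaS F G η (G.vmap k)) (G.mapSqSet (U k)) = idS X (G.vmap k))
    (inj : ∀ {p q : X.Obj} (j : X.Ver p q) {d d' : A.Obj} (l : A.Ver d d')
      (x y : A.SqSet (F.vmap j) l),
      SqSet.hcomp (etaS F G η j) (G.mapSqSet x) = SqSet.hcomp (etaS F G η j) (G.mapSqSet y) →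
      x = y) :
    Nonempty (HorDoubleAdj F G) := by
  have hUtop : ∀ {p q : A.Obj} (k : A.Ver p q),
      X.hComp (η.app (G.obj p)) (G.hmap (U k).1) = X.hId (G.obj p) :=
    fun k => sqset_fst_eq (hU k)
  have hUbot : ∀ {p q : A.Obj} (k : A.Ver p q),
      X.hComp (η.app (G.obj q)) (G.hmap (U k).2.1) = X.hId (G.obj q) :=
    fun k => sqset_snd1_eq (hU k)
  have topEq : ∀ {p q : A.Obj} (k : A.Ver p q), (U k).1 = (U (A.vId p)).1 :=
    fun k => hor_inj hX F G hF hG η hη inj _ _ (by rw [hUtop k, hUtop (A.vId _)])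
  have botEq : ∀ {p q : A.Obj} (k : A.Ver p q), (U k).2.1 = (U (A.vId q)).1 :=
    fun k => hor_inj hX F G hF hG η hη inj _ _ (by rw [hUbot k, hUtop (A.vId _)])
  refine Adj6.mk_adj2 hX hA F G hF hG η hη
    ⟨fun p => (U (A.vId p)).1,
     fun {p q} k => A.recast (topEq k) rfl rfl (botEq k) (U k).2.2⟩ ?_ inj
  intro p q k
  have key : epsS F G
      ⟨fun p => (U (A.vId p)).1,
       fun {p q} k => A.recast (topEq k) rfl rfl (botEq k) (U k).2.2⟩ k = U k := by
    refine sqset_ext (topEq k).symm (botEq k).symm ?_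
    show HEq (A.recast (topEq k) rfl rfl (botEq k) (U k).2.2) (U k).2.2
    exact recast_heq A (topEq k) rfl rfl (botEq k) _
  rw [key]
  exact hU k

end Adj6
/-- For double functors `F : X → A` and `G : A → X`, a
horizontal double adjunction `F ⊣ G` exists if and only if there exists a
horizontal natural transformation `η : 1_X ⇒ GF` such that for every vertical
morphism `j` of `X` the square `η_j` is horizontally universal from `j` to
`G`. -/
theorem double_adjunction_iff_unit_universal
    {X A : DoubleCat} (hX : X.Laws) (hA : A.Laws)
    (F : DoubleFunctor X A) (G : DoubleFunctor A X)
    (hF : F.Laws) (hG : G.Laws) :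
    Nonempty (HorDoubleAdj F G) ↔
      ∃ η : HorNatTrans (DoubleFunctor.idF X) (F.comp G), η.Laws ∧
        ∀ {a b : X.Obj} (j : X.Ver a b),
          G.IsUniversalFrom (j := j) (k := F.vmap j)
            ⟨η.app a, η.app b, η.sq j⟩ := by
  constructor
  · rintro ⟨adj⟩
    refine ⟨adj.unit, adj.unit_laws, ?_⟩
    intro a b j d d' l
    have TFs : ∀ {p q : X.Obj} (i : X.Ver p q),
        DoubleCat.SqSet.hcomp (F.mapSqSet (Adj6.etaS F G adj.unit i))
          (Adj6.epsS F G adj.counit (F.vmap i)) = Adj6.idS A (F.vmap i) :=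
      fun i => Adj6.sqset_ext (adj.triangleF_obj _) (adj.triangleF_obj _) (adj.triangleF_sq i)
    have TGs : ∀ {p q : A.Obj} (m : A.Ver p q),
        DoubleCat.SqSet.hcomp (Adj6.etaS F G adj.unit (G.vmap m))
          (G.mapSqSet (Adj6.epsS F G adj.counit m)) = Adj6.idS X (G.vmap m) :=
      fun m => Adj6.sqset_ext (adj.triangleG_obj _) (adj.triangleG_obj _) (adj.triangleG_sq m)
    have L : ∀ x : A.SqSet (F.vmap j) l,
        DoubleCat.SqSet.hcomp (F.mapSqSet (DoubleCat.SqSet.hcomp (Adj6.etaS F G adj.unit j) (G.mapSqSet x)))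
          (Adj6.epsS F G adj.counit l) = x := by
      intro x
      rw [Adj6.map_hcomp F hF, Adj6.hcomp_assoc hA,
        Adj6.natepsS F G adj.counit adj.counit_laws x, ← Adj6.hcomp_assoc hA, TFs j,
        Adj6.idS_hcomp hA]
    have R : ∀ y : X.SqSet j (G.vmap l),
        DoubleCat.SqSet.hcomp (Adj6.etaS F G adj.unit j)
          (G.mapSqSet (DoubleCat.SqSet.hcomp (F.mapSqSet y) (Adj6.epsS F G adj.counit l))) = y := by
      intro y
      rw [Adj6.map_hcomp G hG, ← Adj6.hcomp_assoc hX,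
        ← Adj6.natetaS F G adj.unit adj.unit_laws y, Adj6.hcomp_assoc hX, TGs l,
        Adj6.hcomp_idS hX]
    exact Function.bijective_iff_has_inverse.mpr
      ⟨fun y => DoubleCat.SqSet.hcomp (F.mapSqSet y) (Adj6.epsS F G adj.counit l),
       fun x => L x, fun y => R y⟩
  · rintro ⟨η, hη, huniv⟩
    have inj : ∀ {p q : X.Obj} (j : X.Ver p q) {d d' : A.Obj} (l : A.Ver d d')
        (x y : A.SqSet (F.vmap j) l),
        DoubleCat.SqSet.hcomp (Adj6.etaS F G η j) (G.mapSqSet x)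
          = DoubleCat.SqSet.hcomp (Adj6.etaS F G η j) (G.mapSqSet y) → x = y := by
      intro p q j d d' l x y h
      exact (huniv j l).1 h
    have exU : ∀ (p q : A.Obj) (k : A.Ver p q), ∃ u : A.SqSet (F.vmap (G.vmap k)) k,
        DoubleCat.SqSet.hcomp (Adj6.etaS F G η (G.vmap k)) (G.mapSqSet u) = Adj6.idS X (G.vmap k) :=
      fun p q k => (huniv (G.vmap k) k).2 (Adj6.idS X (G.vmap k))
    choose U hU using exU
    exact Adj6.mk_adj hX hA F G hF hG η hη (fun {p q} k => U p q k)
      (fun {p q} k => hU p q k) inj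
end

section
/- Let A and X be double categories each equipped with a folding, and let F : X → A and G : A → X be double functors compatible with the foldings. Then F and G are horizontal double adjoints if and only if their horizontal 2-functors HF and HG are 2-adjoints. -/
set_option linter.unusedVariables false

/-! Core definitions: strict 2-categories and strict double categories. -/

universe u v w x u' v' w' x' u'' v'' w'' x''

namespace DoubleCat

/-- A folding on a double category: a holonomy 2-functor together with
bijections between squares and globular squares (2-cells of the horizontal
2-category), compatible with all compositions and identities. -/
structure Folding (D : DoubleCat) where
  hol : ∀ {a b}, D.Ver a b → D.Hor a b
  hol_id : ∀ a, hol (D.vId a) = D.hId a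
  hol_comp : ∀ {a b c} (j : D.Ver a b) (k : D.Ver b c),
    hol (D.vComp j k) = D.hComp (hol j) (hol k)
  fold : ∀ {a b c d} {f : D.Hor a b} {j : D.Ver a c} {k : D.Ver b d}
    {g : D.Hor c d}, D.Sq f j k g →
    D.Sq (D.hComp f (hol k)) (D.vId a) (D.vId d) (D.hComp (hol j) g)
  fold_bij : ∀ {a b c d} (f : D.Hor a b) (j : D.Ver a c) (k : D.Ver b d)
    (g : D.Hor c d), Function.Bijective (fun α : D.Sq f j k g => fold α)
  fold_id : ∀ {a b} {f g : D.Hor a b} (α : D.Sq f (D.vId a) (D.vId b) g),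
    HEq (fold α) α
  fold_hComp : ∀ {a b c a' b' c'} {f₁ : D.Hor a b} {f₂ : D.Hor b c}
    {j : D.Ver a a'} {k : D.Ver b b'} {l : D.Ver c c'} {g₁ : D.Hor a' b'}
    {g₂ : D.Hor b' c'} (α : D.Sq f₁ j k g₁) (β : D.Sq f₂ k l g₂),
    HEq (fold (D.hCompSq α β))
      (D.vCompSq (D.hCompSq (D.idSqV f₁) (fold β))
        (D.recast (D.hAssoc f₁ (hol k) g₂) rfl rfl rfl
          (D.hCompSq (fold α) (D.idSqV g₂))))
  fold_vComp : ∀ {a b c d e e'} {f : D.Hor a b} {j₁ : D.Ver a c}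
    {k₁ : D.Ver b d} {g : D.Hor c d} {j₂ : D.Ver c e} {k₂ : D.Ver d e'}
    {h : D.Hor e e'} (α : D.Sq f j₁ k₁ g) (β : D.Sq g j₂ k₂ h),
    HEq (fold (D.vCompSq α β))
      (D.vCompSq (D.hCompSq (fold α) (D.idSqV (hol k₂)))
        (D.recast (D.hAssoc (hol j₁) g (hol k₂)).symm rfl rfl rfl
          (D.hCompSq (D.idSqV (hol j₁)) (fold β))))
  fold_idSqH : ∀ {a b} (j : D.Ver a b), HEq (fold (D.idSqH j)) (D.idSqV (hol j))

end DoubleCat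

/-- Compatibility of a double functor with foldings. -/
structure FoldCompat {C D : DoubleCat} (F : DoubleFunctor C D)
    (ΛC : C.Folding) (ΛD : D.Folding) : Prop where
  hol : ∀ {a b} (j : C.Ver a b), F.hmap (ΛC.hol j) = ΛD.hol (F.vmap j)
  fold : ∀ {a b c d} {f : C.Hor a b} {j : C.Ver a c} {k : C.Ver b d}
    {g : C.Hor c d} (α : C.Sq f j k g),
    HEq (F.smap (ΛC.fold α)) (ΛD.fold (F.smap α))

/-- Compatibility of a horizontal natural transformation with foldings. -/
structure FoldCompatTrans {C D : DoubleCat} {F G : DoubleFunctor C D}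
    (ΛC : C.Folding) (ΛD : D.Folding) (θ : HorNatTrans F G) : Prop where
  bound : ∀ {a b} (j : C.Ver a b),
    D.hComp (θ.app a) (G.hmap (ΛC.hol j))
      = D.hComp (F.hmap (ΛC.hol j)) (θ.app b)
  fold : ∀ {a b} (j : C.Ver a b),
    HEq (ΛD.fold (θ.sq j))
      (D.idSqV (D.hComp (θ.app a) (G.hmap (ΛC.hol j))))

/-- A 2-natural transformation between 2-functors (data). -/
structure TwoNatTrans {K L : TwoCat} (F G : TwoFunctor K L) where
  app : ∀ a, L.Hom (F.obj a) (G.obj a)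

namespace TwoNatTrans

variable {K L : TwoCat} {F G : TwoFunctor K L}

structure Laws (θ : TwoNatTrans F G) : Prop where
  natural_hom : ∀ {a b} (f : K.Hom a b),
    L.hcomp (F.hmap f) (θ.app b) = L.hcomp (θ.app a) (G.hmap f)
  natural_cell : ∀ {a b} {f g : K.Hom a b} (α : K.Cell f g),
    HEq (L.hcomp₂ (F.cmap α) (L.cid (θ.app b)))
        (L.hcomp₂ (L.cid (θ.app a)) (G.cmap α))

end TwoNatTrans

/-- A (strict) 2-adjunction `F ⊣ G`. -/
structure TwoAdjunction {X A : TwoCat} (F : TwoFunctor X A) (G : TwoFunctor A X) where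
  F_laws : F.Laws
  G_laws : G.Laws
  unit : TwoNatTrans (TwoFunctor.idF X) (F.comp G)
  counit : TwoNatTrans (G.comp F) (TwoFunctor.idF A)
  unit_laws : unit.Laws
  counit_laws : counit.Laws
  triangleF : ∀ a, A.hcomp (F.hmap (unit.app a)) (counit.app (F.obj a)) = A.hid (F.obj a)
  triangleG : ∀ a, X.hcomp (unit.app (G.obj a)) (G.hmap (counit.app a)) = X.hid (G.obj a)

/-- The horizontal 2-functor of a double functor. -/
def DoubleFunctor.toH {C D : DoubleCat} (F : DoubleFunctor C D) (hF : F.Laws) :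
    TwoFunctor C.H D.H where
  obj := F.obj
  hmap := F.hmap
  cmap α := D.recast rfl (hF.vmap_id _) (hF.vmap_id _) rfl (F.smap α)

/-- The vertical 2-functor of a double functor. -/
def DoubleFunctor.toV {C D : DoubleCat} (F : DoubleFunctor C D) (hF : F.Laws) :
    TwoFunctor C.V D.V where
  obj := F.obj
  hmap := F.vmap
  cmap α := D.recast (hF.hmap_id _) rfl rfl (hF.hmap_id _) (F.smap α)

/-! ### Auxiliary lemmas for the main theorem -/

namespace DoubleCat

variable {D : DoubleCat}

theorem recast_heq {a b c d : D.Obj} {f f' : D.Hor a b} {j j' : D.Ver a c}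
    {k k' : D.Ver b d} {g g' : D.Hor c d} (hf : f = f') (hj : j = j') (hk : k = k')
    (hg : g = g') (α : D.Sq f j k g) : HEq (D.recast hf hj hk hg α) α := by
  cases hf; cases hj; cases hk; cases hg; rfl

theorem idSqV_congr {a b : D.Obj} {f g : D.Hor a b} (h : f = g) :
    HEq (D.idSqV f) (D.idSqV g) := by cases h; rfl

theorem hCompSq_congr {a b c a' b' c' : D.Obj}
    {f₁ f₂ : D.Hor a b} {g₁ g₂ : D.Hor b c} {j₁ j₂ : D.Ver a a'}
    {k₁ k₂ : D.Ver b b'} {l₁ l₂ : D.Ver c c'} {f₁' f₂' : D.Hor a' b'}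
    {g₁' g₂' : D.Hor b' c'}
    (hf : f₁ = f₂) (hg : g₁ = g₂) (hj : j₁ = j₂) (hk : k₁ = k₂) (hl : l₁ = l₂)
    (hf' : f₁' = f₂') (hg' : g₁' = g₂')
    {α₁ : D.Sq f₁ j₁ k₁ f₁'} {α₂ : D.Sq f₂ j₂ k₂ f₂'}
    {β₁ : D.Sq g₁ k₁ l₁ g₁'} {β₂ : D.Sq g₂ k₂ l₂ g₂'}
    (hα : HEq α₁ α₂) (hβ : HEq β₁ β₂) :
    HEq (D.hCompSq α₁ β₁) (D.hCompSq α₂ β₂) := by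
  subst hf; subst hg; subst hj; subst hk; subst hl; subst hf'; subst hg'
  cases hα; cases hβ; rfl

theorem vCompSq_congr {a b c d e e' : D.Obj}
    {f₁ f₂ : D.Hor a b} {j₁ j₂ : D.Ver a c} {k₁ k₂ : D.Ver b d}
    {g₁ g₂ : D.Hor c d} {j₁' j₂' : D.Ver c e} {k₁' k₂' : D.Ver d e'}
    {h₁ h₂ : D.Hor e e'}
    (hf : f₁ = f₂) (hj : j₁ = j₂) (hk : k₁ = k₂) (hg : g₁ = g₂)
    (hj' : j₁' = j₂') (hk' : k₁' = k₂') (hh : h₁ = h₂)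
    {α₁ : D.Sq f₁ j₁ k₁ g₁} {α₂ : D.Sq f₂ j₂ k₂ g₂}
    {β₁ : D.Sq g₁ j₁' k₁' h₁} {β₂ : D.Sq g₂ j₂' k₂' h₂}
    (hα : HEq α₁ α₂) (hβ : HEq β₁ β₂) :
    HEq (D.vCompSq α₁ β₁) (D.vCompSq α₂ β₂) := by
  subst hf; subst hj; subst hk; subst hg; subst hj'; subst hk'; subst hh
  cases hα; cases hβ; rfl

/-- Globular square induced by an equality of horizontal morphisms. -/
def eqSq (D : DoubleCat) {a b : D.Obj} {f g : D.Hor a b} (h : f = g) :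
    D.Sq f (D.vId a) (D.vId b) g :=
  D.recast rfl rfl rfl h (D.idSqV f)

theorem eqSq_rfl {a b : D.Obj} (f : D.Hor a b) : D.eqSq (rfl : f = f) = D.idSqV f := rfl

theorem eqSq_heq_idSqV {a b : D.Obj} {f g : D.Hor a b} (h : f = g) :
    HEq (D.eqSq h) (D.idSqV f) := by cases h; rfl

theorem eqSq_congr {a b : D.Obj} {f₁ g₁ f₂ g₂ : D.Hor a b}
    (h₁ : f₁ = g₁) (h₂ : f₂ = g₂) (hf : f₁ = f₂) :
    HEq (D.eqSq h₁) (D.eqSq h₂) := by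
  subst hf; cases h₁; cases h₂; rfl

theorem vCompSq_eqSq_left (hD : D.Laws) {a b c d : D.Obj} {f g : D.Hor a b}
    (h : f = g) {j : D.Ver a c} {k : D.Ver b d} {g' : D.Hor c d}
    (γ : D.Sq g j k g') : HEq (D.vCompSq (D.eqSq h) γ) γ := by
  cases h; exact hD.idSqV_vComp γ

theorem vCompSq_eqSq_right (hD : D.Laws) {a b c d : D.Obj} {f : D.Hor a b}
    {j : D.Ver a c} {k : D.Ver b d} {g g' : D.Hor c d} (h : g = g')
    (γ : D.Sq f j k g) : HEq (D.vCompSq γ (D.eqSq h)) γ := by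
  cases h; exact hD.vComp_idSqV γ

theorem hCompSq_eqSq (hD : D.Laws) {a b c : D.Obj} {f₁ f₂ : D.Hor a b}
    {g₁ g₂ : D.Hor b c} (h : f₁ = f₂) (h' : g₁ = g₂) :
    HEq (D.hCompSq (D.eqSq h) (D.eqSq h'))
      (D.eqSq (show D.hComp f₁ g₁ = D.hComp f₂ g₂ by rw [h, h'])) := by
  cases h; cases h'; exact heq_of_eq (hD.idSqV_hComp f₁ g₁)

namespace Folding

variable (Λ : D.Folding)

theorem fold_congr {a b c d : D.Obj}
    {f₁ f₂ : D.Hor a b} {j₁ j₂ : D.Ver a c} {k₁ k₂ : D.Ver b d} {g₁ g₂ : D.Hor c d}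
    (hf : f₁ = f₂) (hj : j₁ = j₂) (hk : k₁ = k₂) (hg : g₁ = g₂)
    {α : D.Sq f₁ j₁ k₁ g₁} {β : D.Sq f₂ j₂ k₂ g₂} (h : HEq α β) :
    HEq (Λ.fold α) (Λ.fold β) := by
  subst hf; subst hj; subst hk; subst hg; cases h; rfl

theorem fold_inj {a b c d : D.Obj}
    {f₁ f₂ : D.Hor a b} {j₁ j₂ : D.Ver a c} {k₁ k₂ : D.Ver b d} {g₁ g₂ : D.Hor c d}
    (hf : f₁ = f₂) (hj : j₁ = j₂) (hk : k₁ = k₂) (hg : g₁ = g₂)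
    {α : D.Sq f₁ j₁ k₁ g₁} {β : D.Sq f₂ j₂ k₂ g₂}
    (h : HEq (Λ.fold α) (Λ.fold β)) : HEq α β := by
  subst hf; subst hj; subst hk; subst hg
  exact heq_of_eq ((Λ.fold_bij f₁ j₁ k₁ g₁).injective (eq_of_heq h))

/-- The inverse of the folding bijection. -/
noncomputable def unfold {a b c d : D.Obj} (f : D.Hor a b) (j : D.Ver a c)
    (k : D.Ver b d) (g : D.Hor c d)
    (γ : D.Sq (D.hComp f (Λ.hol k)) (D.vId a) (D.vId d) (D.hComp (Λ.hol j) g)) :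
    D.Sq f j k g :=
  (Equiv.ofBijective _ (Λ.fold_bij f j k g)).symm γ

theorem fold_unfold {a b c d : D.Obj} (f : D.Hor a b) (j : D.Ver a c)
    (k : D.Ver b d) (g : D.Hor c d)
    (γ : D.Sq (D.hComp f (Λ.hol k)) (D.vId a) (D.vId d) (D.hComp (Λ.hol j) g)) :
    Λ.fold (Λ.unfold f j k g γ) = γ :=
  (Equiv.ofBijective _ (Λ.fold_bij f j k g)).apply_symm_apply γ

end Folding

end DoubleCat

namespace DoubleFunctor

variable {C D : DoubleCat} (F : DoubleFunctor C D)

theorem smap_congr {a b c d : C.Obj}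
    {f₁ f₂ : C.Hor a b} {j₁ j₂ : C.Ver a c} {k₁ k₂ : C.Ver b d} {g₁ g₂ : C.Hor c d}
    (hf : f₁ = f₂) (hj : j₁ = j₂) (hk : k₁ = k₂) (hg : g₁ = g₂)
    {α : C.Sq f₁ j₁ k₁ g₁} {β : C.Sq f₂ j₂ k₂ g₂} (h : HEq α β) :
    HEq (F.smap α) (F.smap β) := by
  subst hf; subst hj; subst hk; subst hg; cases h; rfl

theorem smap_eqSq (hF : F.Laws) {a b : C.Obj} {f g : C.Hor a b} (h : f = g) :
    HEq (F.smap (C.eqSq h)) (D.eqSq (show F.hmap f = F.hmap g by rw [h])) := by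
  cases h; exact (hF.smap_idSqV f).trans (D.eqSq_heq_idSqV rfl).symm

end DoubleFunctor

namespace DoubleFunctor

variable {C D : DoubleCat}

theorem toH_laws (F : DoubleFunctor C D) (hF : F.Laws) : (F.toH hF).Laws where
  hmap_id := hF.hmap_id
  hmap_comp := hF.hmap_comp
  cmap_cid f := by
    show D.recast rfl _ _ rfl (F.smap (C.idSqV f)) = D.idSqV (F.hmap f)
    exact eq_of_heq ((D.recast_heq _ _ _ _ _).trans (hF.smap_idSqV f))
  cmap_vcomp α β := by
    show D.recast rfl _ _ rfl
        (F.smap (C.recast rfl _ _ rfl (C.vCompSq α β)))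
      = D.recast rfl _ _ rfl
        (D.vCompSq (D.recast rfl _ _ rfl (F.smap α)) (D.recast rfl _ _ rfl (F.smap β)))
    refine eq_of_heq (((D.recast_heq _ _ _ _ _).trans ?_).trans
      (D.recast_heq _ _ _ _ _).symm)
    refine ((F.smap_congr rfl (C.vId_comp _).symm (C.vId_comp _).symm rfl
      (C.recast_heq _ _ _ _ _)).trans ?_)
    refine (hF.smap_vComp α β).trans ?_
    exact D.vCompSq_congr rfl (hF.vmap_id _) (hF.vmap_id _) rfl
      (hF.vmap_id _) (hF.vmap_id _) rfl
      (D.recast_heq _ _ _ _ _).symm (D.recast_heq _ _ _ _ _).symm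
  cmap_hcomp₂ α β := by
    show HEq (D.recast rfl _ _ rfl (F.smap (C.hCompSq α β)))
      (D.hCompSq (D.recast rfl _ _ rfl (F.smap α)) (D.recast rfl _ _ rfl (F.smap β)))
    refine ((D.recast_heq _ _ _ _ _).trans ?_)
    refine (hF.smap_hComp α β).trans ?_
    exact D.hCompSq_congr rfl rfl (hF.vmap_id _) (hF.vmap_id _)
      (hF.vmap_id _) rfl rfl
      (D.recast_heq _ _ _ _ _).symm (D.recast_heq _ _ _ _ _).symm

end DoubleFunctor

section Forward

variable {X A : DoubleCat}
  (F : DoubleFunctor X A) (G : DoubleFunctor A X)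
  (hF : F.Laws) (hG : G.Laws)

/-- From a horizontal double adjunction to a 2-adjunction on horizontal
2-categories. -/
noncomputable def forwardAdj (adj : HorDoubleAdj F G) :
    TwoAdjunction (F.toH hF) (G.toH hG) where
  F_laws := F.toH_laws hF
  G_laws := G.toH_laws hG
  unit := ⟨fun a => adj.unit.app a⟩
  counit := ⟨fun a => adj.counit.app a⟩
  unit_laws := by
    constructor
    · intro a b f; exact adj.unit_laws.natural_hor f
    · intro a b f g α
      show HEq (X.hCompSq α (X.idSqV (adj.unit.app b)))
        (X.hCompSq (X.idSqV (adj.unit.app a))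
          (X.recast rfl _ _ rfl (G.smap (A.recast rfl _ _ rfl (F.smap α)))))
      have h := adj.unit_laws.natural (f := f) (j := X.vId a) (k := X.vId b)
        (g := g) α
      have hka : G.vmap (F.vmap (X.vId a)) = X.vId (G.obj (F.obj a)) := by
        exact (congrArg G.vmap (hF.vmap_id _)).trans (hG.vmap_id _)
      have hkb : G.vmap (F.vmap (X.vId b)) = X.vId (G.obj (F.obj b)) := by
        exact (congrArg G.vmap (hF.vmap_id _)).trans (hG.vmap_id _)
      refine HEq.trans ?_ (h.trans ?_)
      · exact X.hCompSq_congr rfl rfl rfl rfl hkb.symm rfl rfl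
          HEq.rfl (adj.unit_laws.sq_id b).symm
      · refine X.hCompSq_congr rfl rfl rfl hka hkb rfl rfl
          (adj.unit_laws.sq_id a) ?_
        refine HEq.symm ((X.recast_heq _ _ _ _ _).trans ?_)
        exact G.smap_congr rfl (hF.vmap_id _).symm (hF.vmap_id _).symm rfl
          (A.recast_heq _ _ _ _ _)
  counit_laws := by
    constructor
    · intro a b f; exact adj.counit_laws.natural_hor f
    · intro a b f g α
      show HEq
        (A.hCompSq (A.recast rfl _ _ rfl (F.smap (X.recast rfl _ _ rfl (G.smap α))))
          (A.idSqV (adj.counit.app b)))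
        (A.hCompSq (A.idSqV (adj.counit.app a)) α)
      have h := adj.counit_laws.natural (f := f) (j := A.vId a) (k := A.vId b)
        (g := g) α
      have hka : F.vmap (G.vmap (A.vId a)) = A.vId (F.obj (G.obj a)) := by
        exact (congrArg F.vmap (hG.vmap_id _)).trans (hF.vmap_id _)
      have hkb : F.vmap (G.vmap (A.vId b)) = A.vId (F.obj (G.obj b)) := by
        exact (congrArg F.vmap (hG.vmap_id _)).trans (hF.vmap_id _)
      refine HEq.trans ?_ (h.trans ?_)
      · refine A.hCompSq_congr rfl rfl hka.symm hkb.symm rfl rfl rfl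
          ?_ (adj.counit_laws.sq_id b).symm
        refine (A.recast_heq _ _ _ _ _).trans ?_
        exact (F.smap_congr rfl (hG.vmap_id _).symm (hG.vmap_id _).symm rfl
          (X.recast_heq _ _ _ _ _))
      · exact A.hCompSq_congr rfl rfl hka rfl rfl rfl rfl
          (adj.counit_laws.sq_id a) HEq.rfl
  triangleF a := adj.triangleF_obj a
  triangleG a := adj.triangleG_obj a

end Forward

/-! ### Backward direction -/

theorem DoubleCat.hCompSq_eqSq_idSqV {D : DoubleCat} (hD : D.Laws) {a b c : D.Obj}
    {f₁ f₂ : D.Hor a b} (h : f₁ = f₂) (g : D.Hor b c) :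
    HEq (D.hCompSq (D.eqSq h) (D.idSqV g))
      (D.eqSq (show D.hComp f₁ g = D.hComp f₂ g by rw [h])) := by
  cases h; exact heq_of_eq (hD.idSqV_hComp f₁ g)

theorem DoubleCat.hCompSq_idSqV_eqSq {D : DoubleCat} (hD : D.Laws) {a b c : D.Obj}
    (f : D.Hor a b) {g₁ g₂ : D.Hor b c} (h : g₁ = g₂) :
    HEq (D.hCompSq (D.idSqV f) (D.eqSq h))
      (D.eqSq (show D.hComp f g₁ = D.hComp f g₂ by rw [h])) := by
  cases h; exact heq_of_eq (hD.idSqV_hComp f g₁)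

section Backward

set_option linter.unusedSectionVars false

variable {X A : DoubleCat} (hX : X.Laws) (hA : A.Laws)
  (ΛX : X.Folding) (ΛA : A.Folding)
  {F : DoubleFunctor X A} {G : DoubleFunctor A X}
  (hF : F.Laws) (hG : G.Laws)
  (cF : FoldCompat F ΛX ΛA) (cG : FoldCompat G ΛA ΛX)
  (adj : TwoAdjunction (F.toH hF) (G.toH hG))

include hX hA ΛX ΛA hF hG cF cG adj

/-- The unit component, with its type expressed in the double category. -/
noncomputable def uApp (a : X.Obj) : X.Hor a (G.obj (F.obj a)) := adj.unit.app a

/-- The counit component, with its type expressed in the double category. -/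
noncomputable def eApp (r : A.Obj) : A.Hor (F.obj (G.obj r)) r := adj.counit.app r

theorem unit_bound {a b : X.Obj} (j : X.Ver a b) :
    X.hComp (uApp hF hG adj a) (ΛX.hol (G.vmap (F.vmap j)))
      = X.hComp (ΛX.hol j) (uApp hF hG adj b) := by
  have h : X.hComp (ΛX.hol j) (uApp hF hG adj b)
      = X.hComp (uApp hF hG adj a) (G.hmap (F.hmap (ΛX.hol j))) :=
    adj.unit_laws.natural_hom (ΛX.hol j)
  rw [cF.hol, cG.hol] at h
  exact h.symm

theorem unit_bound_hor {a b : X.Obj} (f : X.Hor a b) :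
    X.hComp f (uApp hF hG adj b) = X.hComp (uApp hF hG adj a) (G.hmap (F.hmap f)) :=
  adj.unit_laws.natural_hom f

/-- The square component of the unit, obtained by unfolding. -/
noncomputable def unitSq {a b : X.Obj} (j : X.Ver a b) :
    X.Sq (uApp hF hG adj a) j (G.vmap (F.vmap j)) (uApp hF hG adj b) :=
  ΛX.unfold _ _ _ _ (X.eqSq (unit_bound hX hA ΛX ΛA hF hG cF cG adj j))

theorem fold_unitSq {a b : X.Obj} (j : X.Ver a b) :
    ΛX.fold (unitSq hX hA ΛX ΛA hF hG cF cG adj j)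
      = X.eqSq (unit_bound hX hA ΛX ΛA hF hG cF cG adj j) :=
  ΛX.fold_unfold _ _ _ _ _

theorem unit_sq_id (a : X.Obj) :
    HEq (unitSq hX hA ΛX ΛA hF hG cF cG adj (X.vId a)) (X.idSqV (uApp hF hG adj a)) := by
  have hk : G.vmap (F.vmap (X.vId a)) = X.vId (G.obj (F.obj a)) := by
    rw [hF.vmap_id, hG.vmap_id]
  refine ΛX.fold_inj rfl rfl hk rfl ?_
  rw [fold_unitSq]
  refine (X.eqSq_heq_idSqV _).trans ?_
  refine HEq.trans (X.idSqV_congr (show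
      X.hComp (uApp hF hG adj a) (ΛX.hol (G.vmap (F.vmap (X.vId a)))) = uApp hF hG adj a
    by rw [hk]; rw [ΛX.hol_id, X.hComp_id])) ?_
  exact (ΛX.fold_id (X.idSqV (uApp hF hG adj a))).symm

theorem unit_sq_comp {a b c : X.Obj} (j : X.Ver a b) (j' : X.Ver b c) :
    HEq (unitSq hX hA ΛX ΛA hF hG cF cG adj (X.vComp j j'))
      (X.vCompSq (unitSq hX hA ΛX ΛA hF hG cF cG adj j)
        (unitSq hX hA ΛX ΛA hF hG cF cG adj j')) := by
  have hk : G.vmap (F.vmap (X.vComp j j'))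
      = X.vComp (G.vmap (F.vmap j)) (G.vmap (F.vmap j')) := by
    rw [hF.vmap_comp, hG.vmap_comp]
  refine ΛX.fold_inj rfl rfl hk rfl ?_
  rw [fold_unitSq]
  have h1 := ΛX.fold_vComp (unitSq hX hA ΛX ΛA hF hG cF cG adj j)
    (unitSq hX hA ΛX ΛA hF hG cF cG adj j')
  rw [fold_unitSq, fold_unitSq] at h1
  have h2 := X.hCompSq_eqSq_idSqV hX (unit_bound hX hA ΛX ΛA hF hG cF cG adj j)
    (ΛX.hol (G.vmap (F.vmap j')))
  have h3 := (X.recast_heq (X.hAssoc (ΛX.hol j) (uApp hF hG adj b)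
      (ΛX.hol (G.vmap (F.vmap j')))).symm rfl rfl rfl
      (X.hCompSq (X.idSqV (ΛX.hol j))
        (X.eqSq (unit_bound hX hA ΛX ΛA hF hG cF cG adj j')))).trans
    ((X.hCompSq_idSqV_eqSq hX (ΛX.hol j)
        (unit_bound hX hA ΛX ΛA hF hG cF cG adj j')).trans
      (X.eqSq_congr _ (show
          X.hComp (X.hComp (ΛX.hol j) (uApp hF hG adj b)) (ΛX.hol (G.vmap (F.vmap j')))
            = X.hComp (ΛX.hol j) (X.hComp (ΛX.hol j') (uApp hF hG adj c)) by
        rw [X.hAssoc, unit_bound hX hA ΛX ΛA hF hG cF cG adj j'])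
        (X.hAssoc _ _ _).symm))
  have h4 := X.vCompSq_congr rfl rfl rfl rfl rfl rfl rfl h2 h3
  have h5 := X.vCompSq_eqSq_left hX
    (show X.hComp (X.hComp (uApp hF hG adj a) (ΛX.hol (G.vmap (F.vmap j))))
          (ΛX.hol (G.vmap (F.vmap j')))
        = X.hComp (X.hComp (ΛX.hol j) (uApp hF hG adj b)) (ΛX.hol (G.vmap (F.vmap j')))
      by rw [unit_bound hX hA ΛX ΛA hF hG cF cG adj j])
    (X.eqSq (show
      X.hComp (X.hComp (ΛX.hol j) (uApp hF hG adj b)) (ΛX.hol (G.vmap (F.vmap j')))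
        = X.hComp (ΛX.hol j) (X.hComp (ΛX.hol j') (uApp hF hG adj c)) by
      rw [X.hAssoc, unit_bound hX hA ΛX ΛA hF hG cF cG adj j']))
  have h6 := X.eqSq_congr
    (unit_bound hX hA ΛX ΛA hF hG cF cG adj (X.vComp j j'))
    (show X.hComp (X.hComp (ΛX.hol j) (uApp hF hG adj b)) (ΛX.hol (G.vmap (F.vmap j')))
        = X.hComp (ΛX.hol j) (X.hComp (ΛX.hol j') (uApp hF hG adj c)) by
      rw [X.hAssoc, unit_bound hX hA ΛX ΛA hF hG cF cG adj j'])
    (show X.hComp (uApp hF hG adj a) (ΛX.hol (G.vmap (F.vmap (X.vComp j j'))))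
        = X.hComp (X.hComp (ΛX.hol j) (uApp hF hG adj b)) (ΛX.hol (G.vmap (F.vmap j'))) by
      rw [hk, ΛX.hol_comp, ← X.hAssoc, unit_bound hX hA ΛX ΛA hF hG cF cG adj j])
  exact h6.trans ((h5.symm.trans h4.symm).trans h1.symm)

theorem counit_bound {r r' : A.Obj} (k : A.Ver r r') :
    A.hComp (eApp hF hG adj r) (ΛA.hol k)
      = A.hComp (ΛA.hol (F.vmap (G.vmap k))) (eApp hF hG adj r') := by
  have h : A.hComp (F.hmap (G.hmap (ΛA.hol k))) (eApp hF hG adj r')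
      = A.hComp (eApp hF hG adj r) (ΛA.hol k) :=
    adj.counit_laws.natural_hom (ΛA.hol k)
  rw [cG.hol, cF.hol] at h
  exact h.symm

theorem counit_bound_hor {r r' : A.Obj} (f : A.Hor r r') :
    A.hComp (F.hmap (G.hmap f)) (eApp hF hG adj r')
      = A.hComp (eApp hF hG adj r) f :=
  adj.counit_laws.natural_hom f

/-- The square component of the counit, obtained by unfolding. -/
noncomputable def counitSq {r r' : A.Obj} (k : A.Ver r r') :
    A.Sq (eApp hF hG adj r) (F.vmap (G.vmap k)) k (eApp hF hG adj r') :=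
  ΛA.unfold _ _ _ _ (A.eqSq (counit_bound hX hA ΛX ΛA hF hG cF cG adj k))

theorem fold_counitSq {r r' : A.Obj} (k : A.Ver r r') :
    ΛA.fold (counitSq hX hA ΛX ΛA hF hG cF cG adj k)
      = A.eqSq (counit_bound hX hA ΛX ΛA hF hG cF cG adj k) :=
  ΛA.fold_unfold _ _ _ _ _

theorem counit_sq_id (r : A.Obj) :
    HEq (counitSq hX hA ΛX ΛA hF hG cF cG adj (A.vId r))
      (A.idSqV (eApp hF hG adj r)) := by
  have hj : F.vmap (G.vmap (A.vId r)) = A.vId (F.obj (G.obj r)) := by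
    rw [hG.vmap_id, hF.vmap_id]
  refine ΛA.fold_inj rfl hj rfl rfl ?_
  rw [fold_counitSq]
  refine (A.eqSq_heq_idSqV _).trans ?_
  refine HEq.trans (A.idSqV_congr (show
      A.hComp (eApp hF hG adj r) (ΛA.hol (A.vId r)) = eApp hF hG adj r by
    rw [ΛA.hol_id, A.hComp_id])) ?_
  exact (ΛA.fold_id (A.idSqV (eApp hF hG adj r))).symm

theorem counit_sq_comp {r s t : A.Obj} (k : A.Ver r s) (k' : A.Ver s t) :
    HEq (counitSq hX hA ΛX ΛA hF hG cF cG adj (A.vComp k k'))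
      (A.vCompSq (counitSq hX hA ΛX ΛA hF hG cF cG adj k)
        (counitSq hX hA ΛX ΛA hF hG cF cG adj k')) := by
  have hj : F.vmap (G.vmap (A.vComp k k'))
      = A.vComp (F.vmap (G.vmap k)) (F.vmap (G.vmap k')) := by
    rw [hG.vmap_comp, hF.vmap_comp]
  refine ΛA.fold_inj rfl hj rfl rfl ?_
  rw [fold_counitSq]
  have h1 := ΛA.fold_vComp (counitSq hX hA ΛX ΛA hF hG cF cG adj k)
    (counitSq hX hA ΛX ΛA hF hG cF cG adj k')
  rw [fold_counitSq, fold_counitSq] at h1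
  have h2 := A.hCompSq_eqSq_idSqV hA (counit_bound hX hA ΛX ΛA hF hG cF cG adj k)
    (ΛA.hol k')
  have h3 := (A.recast_heq (A.hAssoc (ΛA.hol (F.vmap (G.vmap k)))
      (eApp hF hG adj s) (ΛA.hol k')).symm rfl rfl rfl
      (A.hCompSq (A.idSqV (ΛA.hol (F.vmap (G.vmap k))))
        (A.eqSq (counit_bound hX hA ΛX ΛA hF hG cF cG adj k')))).trans
    ((A.hCompSq_idSqV_eqSq hA (ΛA.hol (F.vmap (G.vmap k)))
        (counit_bound hX hA ΛX ΛA hF hG cF cG adj k')).trans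
      (A.eqSq_congr _ (show
          A.hComp (A.hComp (ΛA.hol (F.vmap (G.vmap k))) (eApp hF hG adj s)) (ΛA.hol k')
            = A.hComp (ΛA.hol (F.vmap (G.vmap k)))
                (A.hComp (ΛA.hol (F.vmap (G.vmap k'))) (eApp hF hG adj t)) by
        rw [A.hAssoc, counit_bound hX hA ΛX ΛA hF hG cF cG adj k'])
        (A.hAssoc _ _ _).symm))
  have h4 := A.vCompSq_congr rfl rfl rfl rfl rfl rfl rfl h2 h3
  have h5 := A.vCompSq_eqSq_left hA
    (show A.hComp (A.hComp (eApp hF hG adj r) (ΛA.hol k)) (ΛA.hol k')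
        = A.hComp (A.hComp (ΛA.hol (F.vmap (G.vmap k))) (eApp hF hG adj s)) (ΛA.hol k')
      by rw [counit_bound hX hA ΛX ΛA hF hG cF cG adj k])
    (A.eqSq (show
      A.hComp (A.hComp (ΛA.hol (F.vmap (G.vmap k))) (eApp hF hG adj s)) (ΛA.hol k')
        = A.hComp (ΛA.hol (F.vmap (G.vmap k)))
            (A.hComp (ΛA.hol (F.vmap (G.vmap k'))) (eApp hF hG adj t)) by
      rw [A.hAssoc, counit_bound hX hA ΛX ΛA hF hG cF cG adj k']))
  have h6 := A.eqSq_congr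
    (counit_bound hX hA ΛX ΛA hF hG cF cG adj (A.vComp k k'))
    (show A.hComp (A.hComp (ΛA.hol (F.vmap (G.vmap k))) (eApp hF hG adj s)) (ΛA.hol k')
        = A.hComp (ΛA.hol (F.vmap (G.vmap k)))
            (A.hComp (ΛA.hol (F.vmap (G.vmap k'))) (eApp hF hG adj t)) by
      rw [A.hAssoc, counit_bound hX hA ΛX ΛA hF hG cF cG adj k'])
    (show A.hComp (eApp hF hG adj r) (ΛA.hol (A.vComp k k'))
        = A.hComp (A.hComp (ΛA.hol (F.vmap (G.vmap k))) (eApp hF hG adj s)) (ΛA.hol k') by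
      rw [ΛA.hol_comp, ← A.hAssoc, counit_bound hX hA ΛX ΛA hF hG cF cG adj k])
  exact h6.trans ((h5.symm.trans h4.symm).trans h1.symm)

theorem unit_natural {a b c d : X.Obj} {f : X.Hor a b} {j : X.Ver a c}
    {k : X.Ver b d} {g : X.Hor c d} (α : X.Sq f j k g) :
    HEq (X.hCompSq α (unitSq hX hA ΛX ΛA hF hG cF cG adj k))
      (X.hCompSq (unitSq hX hA ΛX ΛA hF hG cF cG adj j) (G.smap (F.smap α))) := by
  have hf : X.hComp f (uApp hF hG adj b) = X.hComp (uApp hF hG adj a) (G.hmap (F.hmap f)) :=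
    unit_bound_hor hX hA ΛX ΛA hF hG cF cG adj f
  have hg : X.hComp g (uApp hF hG adj d) = X.hComp (uApp hF hG adj c) (G.hmap (F.hmap g)) :=
    unit_bound_hor hX hA ΛX ΛA hF hG cF cG adj g
  refine ΛX.fold_inj hf rfl rfl hg ?_
  -- the 2-naturality cell
  have nc : HEq (X.hCompSq (ΛX.fold α) (X.idSqV (uApp hF hG adj d)))
      (X.hCompSq (X.idSqV (uApp hF hG adj a))
        (X.recast rfl (hG.vmap_id _) (hG.vmap_id _) rfl
          (G.smap (A.recast rfl (hF.vmap_id _) (hF.vmap_id _) rfl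
            (F.smap (ΛX.fold α)))))) :=
    adj.unit_laws.natural_cell (ΛX.fold α)
  -- left-hand side
  have l1 := ΛX.fold_hComp α (unitSq hX hA ΛX ΛA hF hG cF cG adj k)
  rw [fold_unitSq] at l1
  have l2 := X.hCompSq_idSqV_eqSq hX f (unit_bound hX hA ΛX ΛA hF hG cF cG adj k)
  have l3 := X.vCompSq_congr rfl rfl rfl rfl rfl rfl rfl l2
    (HEq.refl (X.recast (X.hAssoc f (ΛX.hol k) (uApp hF hG adj d)) rfl rfl rfl
      (X.hCompSq (ΛX.fold α) (X.idSqV (uApp hF hG adj d)))))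
  have l4 := X.vCompSq_eqSq_left hX
    (show X.hComp f (X.hComp (uApp hF hG adj b) (ΛX.hol (G.vmap (F.vmap k))))
        = X.hComp f (X.hComp (ΛX.hol k) (uApp hF hG adj d)) by
      rw [unit_bound hX hA ΛX ΛA hF hG cF cG adj k])
    (X.recast (X.hAssoc f (ΛX.hol k) (uApp hF hG adj d)) rfl rfl rfl
      (X.hCompSq (ΛX.fold α) (X.idSqV (uApp hF hG adj d))))
  have l5 := X.recast_heq (X.hAssoc f (ΛX.hol k) (uApp hF hG adj d)) rfl rfl rfl
    (X.hCompSq (ΛX.fold α) (X.idSqV (uApp hF hG adj d)))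
  -- right-hand side
  have r1 := ΛX.fold_hComp (unitSq hX hA ΛX ΛA hF hG cF cG adj j) (G.smap (F.smap α))
  rw [fold_unitSq] at r1
  have rf : HEq (ΛX.fold (G.smap (F.smap α))) (G.smap (F.smap (ΛX.fold α))) :=
    (cG.fold (F.smap α)).symm.trans (G.smap_congr
      (show A.hComp (F.hmap f) (ΛA.hol (F.vmap k)) = F.hmap (X.hComp f (ΛX.hol k)) by
        rw [hF.hmap_comp, cF.hol])
      (hF.vmap_id _).symm (hF.vmap_id _).symm
      (show A.hComp (ΛA.hol (F.vmap j)) (F.hmap g) = F.hmap (X.hComp (ΛX.hol j) g) by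
        rw [hF.hmap_comp, cF.hol])
      ((cF.fold α).symm))
  have rc : HEq (X.recast rfl (hG.vmap_id _) (hG.vmap_id _) rfl
        (G.smap (A.recast rfl (hF.vmap_id _) (hF.vmap_id _) rfl
          (F.smap (ΛX.fold α)))))
      (G.smap (F.smap (ΛX.fold α))) :=
    (X.recast_heq _ _ _ _ _).trans (G.smap_congr rfl (hF.vmap_id _).symm
      (hF.vmap_id _).symm rfl (A.recast_heq _ _ _ _ _))
  have r3 := (X.recast_heq (X.hAssoc (uApp hF hG adj a) (ΛX.hol (G.vmap (F.vmap j)))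
      (G.hmap (F.hmap g))) rfl rfl rfl
      (X.hCompSq (X.eqSq (unit_bound hX hA ΛX ΛA hF hG cF cG adj j))
        (X.idSqV (G.hmap (F.hmap g))))).trans
    ((X.hCompSq_eqSq_idSqV hX (unit_bound hX hA ΛX ΛA hF hG cF cG adj j)
        (G.hmap (F.hmap g))).trans
      (X.eqSq_congr _
        (show X.hComp (uApp hF hG adj a)
              (X.hComp (ΛX.hol (G.vmap (F.vmap j))) (G.hmap (F.hmap g)))
            = X.hComp (X.hComp (ΛX.hol j) (uApp hF hG adj c)) (G.hmap (F.hmap g)) by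
          rw [← X.hAssoc, unit_bound hX hA ΛX ΛA hF hG cF cG adj j])
        (X.hAssoc _ _ _)))
  have r4 := X.vCompSq_congr rfl rfl rfl rfl rfl rfl rfl
    (HEq.refl (X.hCompSq (X.idSqV (uApp hF hG adj a)) (ΛX.fold (G.smap (F.smap α))))) r3
  have r5 := X.vCompSq_eqSq_right hX
    (show X.hComp (uApp hF hG adj a)
          (X.hComp (ΛX.hol (G.vmap (F.vmap j))) (G.hmap (F.hmap g)))
        = X.hComp (X.hComp (ΛX.hol j) (uApp hF hG adj c)) (G.hmap (F.hmap g)) by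
      rw [← X.hAssoc, unit_bound hX hA ΛX ΛA hF hG cF cG adj j])
    (X.hCompSq (X.idSqV (uApp hF hG adj a)) (ΛX.fold (G.smap (F.smap α))))
  have r6 := X.hCompSq_congr rfl
    (show X.hComp (G.hmap (F.hmap f)) (ΛX.hol (G.vmap (F.vmap k)))
        = G.hmap (F.hmap (X.hComp f (ΛX.hol k))) by
      rw [hF.hmap_comp, hG.hmap_comp, cF.hol, cG.hol])
    rfl rfl rfl rfl
    (show X.hComp (ΛX.hol (G.vmap (F.vmap j))) (G.hmap (F.hmap g))
        = G.hmap (F.hmap (X.hComp (ΛX.hol j) g)) by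
      rw [hF.hmap_comp, hG.hmap_comp, cF.hol, cG.hol])
    (HEq.refl (X.idSqV (uApp hF hG adj a))) (rf.trans rc.symm)
  exact (l1.trans (l3.trans (l4.trans l5))).trans
    (nc.trans ((r6.symm.trans r5.symm).trans (r4.symm.trans r1.symm)))

theorem counit_natural {r s r' s' : A.Obj} {f : A.Hor r s} {j : A.Ver r r'}
    {k : A.Ver s s'} {g : A.Hor r' s'} (β : A.Sq f j k g) :
    HEq (A.hCompSq (F.smap (G.smap β)) (counitSq hX hA ΛX ΛA hF hG cF cG adj k))
      (A.hCompSq (counitSq hX hA ΛX ΛA hF hG cF cG adj j) β) := by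
  have hf : A.hComp (F.hmap (G.hmap f)) (eApp hF hG adj s)
      = A.hComp (eApp hF hG adj r) f :=
    counit_bound_hor hX hA ΛX ΛA hF hG cF cG adj f
  have hg : A.hComp (F.hmap (G.hmap g)) (eApp hF hG adj s')
      = A.hComp (eApp hF hG adj r') g :=
    counit_bound_hor hX hA ΛX ΛA hF hG cF cG adj g
  refine ΛA.fold_inj hf rfl rfl hg ?_
  have nc : HEq
      (A.hCompSq (A.recast rfl (hF.vmap_id _) (hF.vmap_id _) rfl
          (F.smap (X.recast rfl (hG.vmap_id _) (hG.vmap_id _) rfl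
            (G.smap (ΛA.fold β)))))
        (A.idSqV (eApp hF hG adj s')))
      (A.hCompSq (A.idSqV (eApp hF hG adj r)) (ΛA.fold β)) :=
    adj.counit_laws.natural_cell (ΛA.fold β)
  -- left-hand side
  have l1 := ΛA.fold_hComp (F.smap (G.smap β)) (counitSq hX hA ΛX ΛA hF hG cF cG adj k)
  rw [fold_counitSq] at l1
  have l2 := A.hCompSq_idSqV_eqSq hA (F.hmap (G.hmap f))
    (counit_bound hX hA ΛX ΛA hF hG cF cG adj k)
  have l3 := A.vCompSq_congr rfl rfl rfl rfl rfl rfl rfl l2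
    (HEq.refl (A.recast (A.hAssoc (F.hmap (G.hmap f)) (ΛA.hol (F.vmap (G.vmap k))) (eApp hF hG adj s'))
      rfl rfl rfl
      (A.hCompSq (ΛA.fold (F.smap (G.smap β))) (A.idSqV (eApp hF hG adj s')))))
  have l4 := A.vCompSq_eqSq_left hA
    (show A.hComp (F.hmap (G.hmap f)) (A.hComp (eApp hF hG adj s) (ΛA.hol k))
        = A.hComp (F.hmap (G.hmap f))
            (A.hComp (ΛA.hol (F.vmap (G.vmap k))) (eApp hF hG adj s')) by
      rw [counit_bound hX hA ΛX ΛA hF hG cF cG adj k])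
    (A.recast (A.hAssoc (F.hmap (G.hmap f)) (ΛA.hol (F.vmap (G.vmap k))) (eApp hF hG adj s')) rfl rfl rfl
      (A.hCompSq (ΛA.fold (F.smap (G.smap β))) (A.idSqV (eApp hF hG adj s'))))
  have l5 := A.recast_heq (A.hAssoc (F.hmap (G.hmap f)) (ΛA.hol (F.vmap (G.vmap k))) (eApp hF hG adj s'))
    rfl rfl rfl
    (A.hCompSq (ΛA.fold (F.smap (G.smap β))) (A.idSqV (eApp hF hG adj s')))
  have rf : HEq (ΛA.fold (F.smap (G.smap β))) (F.smap (G.smap (ΛA.fold β))) :=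
    (cF.fold (G.smap β)).symm.trans (F.smap_congr
      (show X.hComp (G.hmap f) (ΛX.hol (G.vmap k)) = G.hmap (A.hComp f (ΛA.hol k)) by
        rw [hG.hmap_comp, cG.hol])
      (hG.vmap_id _).symm (hG.vmap_id _).symm
      (show X.hComp (ΛX.hol (G.vmap j)) (G.hmap g) = G.hmap (A.hComp (ΛA.hol j) g) by
        rw [hG.hmap_comp, cG.hol])
      ((cG.fold β).symm))
  have rc : HEq (A.recast rfl (hF.vmap_id _) (hF.vmap_id _) rfl
        (F.smap (X.recast rfl (hG.vmap_id _) (hG.vmap_id _) rfl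
          (G.smap (ΛA.fold β)))))
      (F.smap (G.smap (ΛA.fold β))) :=
    (A.recast_heq _ _ _ _ _).trans (F.smap_congr rfl (hG.vmap_id _).symm
      (hG.vmap_id _).symm rfl (X.recast_heq _ _ _ _ _))
  have l6 := A.hCompSq_congr
    (show A.hComp (F.hmap (G.hmap f)) (ΛA.hol (F.vmap (G.vmap k)))
        = F.hmap (G.hmap (A.hComp f (ΛA.hol k))) by
      rw [hG.hmap_comp, hF.hmap_comp, cG.hol, cF.hol])
    rfl rfl rfl rfl
    (show A.hComp (ΛA.hol (F.vmap (G.vmap j))) (F.hmap (G.hmap g))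
        = F.hmap (G.hmap (A.hComp (ΛA.hol j) g)) by
      rw [hG.hmap_comp, hF.hmap_comp, cG.hol, cF.hol])
    rfl
    (rf.trans rc.symm) (HEq.refl (A.idSqV (eApp hF hG adj s')))
  -- right-hand side
  have r1 := ΛA.fold_hComp (counitSq hX hA ΛX ΛA hF hG cF cG adj j) β
  rw [fold_counitSq] at r1
  have r3 := (A.recast_heq (A.hAssoc (eApp hF hG adj r) (ΛA.hol j) g) rfl rfl rfl
      (A.hCompSq (A.eqSq (counit_bound hX hA ΛX ΛA hF hG cF cG adj j))
        (A.idSqV g))).trans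
    ((A.hCompSq_eqSq_idSqV hA (counit_bound hX hA ΛX ΛA hF hG cF cG adj j) g).trans
      (A.eqSq_congr _
        (show A.hComp (eApp hF hG adj r) (A.hComp (ΛA.hol j) g)
            = A.hComp (A.hComp (ΛA.hol (F.vmap (G.vmap j))) (eApp hF hG adj r')) g by
          rw [← A.hAssoc, counit_bound hX hA ΛX ΛA hF hG cF cG adj j])
        (A.hAssoc _ _ _)))
  have r4 := A.vCompSq_congr rfl rfl rfl rfl rfl rfl rfl
    (HEq.refl (A.hCompSq (A.idSqV (eApp hF hG adj r)) (ΛA.fold β))) r3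
  have r5 := A.vCompSq_eqSq_right hA
    (show A.hComp (eApp hF hG adj r) (A.hComp (ΛA.hol j) g)
        = A.hComp (A.hComp (ΛA.hol (F.vmap (G.vmap j))) (eApp hF hG adj r')) g by
      rw [← A.hAssoc, counit_bound hX hA ΛX ΛA hF hG cF cG adj j])
    (A.hCompSq (A.idSqV (eApp hF hG adj r)) (ΛA.fold β))
  exact ((l1.trans (l3.trans (l4.trans l5))).trans l6).trans
    (nc.trans (r5.symm.trans (r4.symm.trans r1.symm)))

theorem triangleF_sq {a b : X.Obj} (j : X.Ver a b) :
    HEq (A.hCompSq (F.smap (unitSq hX hA ΛX ΛA hF hG cF cG adj j))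
        (counitSq hX hA ΛX ΛA hF hG cF cG adj (F.vmap j)))
      (A.idSqH (F.vmap j)) := by
  have htriA : A.hComp (F.hmap (uApp hF hG adj a)) (eApp hF hG adj (F.obj a))
      = A.hId (F.obj a) := adj.triangleF a
  have htriB : A.hComp (F.hmap (uApp hF hG adj b)) (eApp hF hG adj (F.obj b))
      = A.hId (F.obj b) := adj.triangleF b
  refine ΛA.fold_inj htriA rfl rfl htriB ?_
  -- the fold of F applied to the unit square, in A-boundary form
  have E0 : A.hComp (F.hmap (uApp hF hG adj a)) (ΛA.hol (F.vmap (G.vmap (F.vmap j))))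
      = A.hComp (ΛA.hol (F.vmap j)) (F.hmap (uApp hF hG adj b)) := by
    have h := congrArg F.hmap (unit_bound hX hA ΛX ΛA hF hG cF cG adj j)
    rw [hF.hmap_comp, hF.hmap_comp, cF.hol, cF.hol] at h
    exact h
  have tf : HEq (ΛA.fold (F.smap (unitSq hX hA ΛX ΛA hF hG cF cG adj j)))
      (A.eqSq E0) := by
    refine (cF.fold (unitSq hX hA ΛX ΛA hF hG cF cG adj j)).symm.trans ?_
    rw [fold_unitSq]
    refine (F.smap_eqSq hF _).trans ?_
    refine A.eqSq_congr _ E0 ?_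
    rw [hF.hmap_comp, cF.hol]
  -- compute the fold of the composite
  have t1 := ΛA.fold_hComp (F.smap (unitSq hX hA ΛX ΛA hF hG cF cG adj j))
    (counitSq hX hA ΛX ΛA hF hG cF cG adj (F.vmap j))
  rw [fold_counitSq] at t1
  have t2 := A.hCompSq_idSqV_eqSq hA (F.hmap (uApp hF hG adj a))
    (counit_bound hX hA ΛX ΛA hF hG cF cG adj (F.vmap j))
  have tr := (A.recast_heq (A.hAssoc (F.hmap (uApp hF hG adj a))
      (ΛA.hol (F.vmap (G.vmap (F.vmap j)))) (eApp hF hG adj (F.obj b))) rfl rfl rfl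
      (A.hCompSq (ΛA.fold (F.smap (unitSq hX hA ΛX ΛA hF hG cF cG adj j)))
        (A.idSqV (eApp hF hG adj (F.obj b))))).trans
    ((A.hCompSq_congr rfl rfl rfl rfl rfl rfl rfl tf
        (HEq.refl (A.idSqV (eApp hF hG adj (F.obj b))))).trans
      ((A.hCompSq_eqSq_idSqV hA E0 (eApp hF hG adj (F.obj b))).trans
        (A.eqSq_congr _
          (show A.hComp (F.hmap (uApp hF hG adj a))
                (A.hComp (ΛA.hol (F.vmap (G.vmap (F.vmap j))))
                  (eApp hF hG adj (F.obj b)))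
              = A.hComp (A.hComp (ΛA.hol (F.vmap j)) (F.hmap (uApp hF hG adj b)))
                  (eApp hF hG adj (F.obj b)) by
            rw [← A.hAssoc, E0])
          (A.hAssoc _ _ _))))
  have t3 := A.vCompSq_congr rfl rfl rfl rfl rfl rfl rfl t2 tr
  have t4 := A.vCompSq_eqSq_left hA
    (show A.hComp (F.hmap (uApp hF hG adj a))
          (A.hComp (eApp hF hG adj (F.obj a)) (ΛA.hol (F.vmap j)))
        = A.hComp (F.hmap (uApp hF hG adj a))
            (A.hComp (ΛA.hol (F.vmap (G.vmap (F.vmap j)))) (eApp hF hG adj (F.obj b))) by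
      rw [counit_bound hX hA ΛX ΛA hF hG cF cG adj (F.vmap j)])
    (A.eqSq (show A.hComp (F.hmap (uApp hF hG adj a))
          (A.hComp (ΛA.hol (F.vmap (G.vmap (F.vmap j)))) (eApp hF hG adj (F.obj b)))
        = A.hComp (A.hComp (ΛA.hol (F.vmap j)) (F.hmap (uApp hF hG adj b)))
            (eApp hF hG adj (F.obj b)) by
      rw [← A.hAssoc, E0]))
  -- the right-hand side
  have t5 := ΛA.fold_idSqH (F.vmap j)
  -- compare
  refine (t1.trans (t3.trans t4)).trans ?_
  refine HEq.trans ((A.eqSq_heq_idSqV _).trans (A.idSqV_congr (show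
      A.hComp (F.hmap (uApp hF hG adj a))
          (A.hComp (ΛA.hol (F.vmap (G.vmap (F.vmap j)))) (eApp hF hG adj (F.obj b)))
        = ΛA.hol (F.vmap j) by
    rw [show ΛA.hol (F.vmap (G.vmap (F.vmap j)))
          = F.hmap (G.hmap (ΛA.hol (F.vmap j))) by
        rw [← cF.hol (G.vmap (F.vmap j)), ← cG.hol (F.vmap j)],
      counit_bound_hor hX hA ΛX ΛA hF hG cF cG adj (ΛA.hol (F.vmap j)),
      ← A.hAssoc, htriA, A.hId_comp]))) ?_
  exact t5.symm

theorem triangleG_sq {r r' : A.Obj} (k : A.Ver r r') :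
    HEq (X.hCompSq (unitSq hX hA ΛX ΛA hF hG cF cG adj (G.vmap k))
        (G.smap (counitSq hX hA ΛX ΛA hF hG cF cG adj k)))
      (X.idSqH (G.vmap k)) := by
  have htriR : X.hComp (uApp hF hG adj (G.obj r)) (G.hmap (eApp hF hG adj r))
      = X.hId (G.obj r) := adj.triangleG r
  have htriR' : X.hComp (uApp hF hG adj (G.obj r')) (G.hmap (eApp hF hG adj r'))
      = X.hId (G.obj r') := adj.triangleG r'
  refine ΛX.fold_inj htriR rfl rfl htriR' ?_
  have E0 : X.hComp (G.hmap (eApp hF hG adj r)) (ΛX.hol (G.vmap k))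
      = X.hComp (ΛX.hol (G.vmap (F.vmap (G.vmap k)))) (G.hmap (eApp hF hG adj r')) := by
    have h := congrArg G.hmap (counit_bound hX hA ΛX ΛA hF hG cF cG adj k)
    rw [hG.hmap_comp, hG.hmap_comp, cG.hol, cG.hol] at h
    exact h
  have tf : HEq (ΛX.fold (G.smap (counitSq hX hA ΛX ΛA hF hG cF cG adj k)))
      (X.eqSq E0) := by
    refine (cG.fold (counitSq hX hA ΛX ΛA hF hG cF cG adj k)).symm.trans ?_
    rw [fold_counitSq]
    refine (G.smap_eqSq hG _).trans ?_
    refine X.eqSq_congr _ E0 ?_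
    rw [hG.hmap_comp, cG.hol]
  have t1 := ΛX.fold_hComp (unitSq hX hA ΛX ΛA hF hG cF cG adj (G.vmap k))
    (G.smap (counitSq hX hA ΛX ΛA hF hG cF cG adj k))
  rw [fold_unitSq] at t1
  have tr := (X.recast_heq (X.hAssoc (uApp hF hG adj (G.obj r))
      (ΛX.hol (G.vmap (F.vmap (G.vmap k)))) (G.hmap (eApp hF hG adj r'))) rfl rfl rfl
      (X.hCompSq (X.eqSq (unit_bound hX hA ΛX ΛA hF hG cF cG adj (G.vmap k)))
        (X.idSqV (G.hmap (eApp hF hG adj r'))))).trans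
    ((X.hCompSq_eqSq_idSqV hX (unit_bound hX hA ΛX ΛA hF hG cF cG adj (G.vmap k))
        (G.hmap (eApp hF hG adj r'))).trans
      (X.eqSq_congr _
        (show X.hComp (uApp hF hG adj (G.obj r))
              (X.hComp (ΛX.hol (G.vmap (F.vmap (G.vmap k))))
                (G.hmap (eApp hF hG adj r')))
            = X.hComp (X.hComp (ΛX.hol (G.vmap k)) (uApp hF hG adj (G.obj r')))
                (G.hmap (eApp hF hG adj r')) by
          rw [← X.hAssoc, unit_bound hX hA ΛX ΛA hF hG cF cG adj (G.vmap k)])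
        (X.hAssoc _ _ _)))
  have t2 := X.hCompSq_congr rfl rfl rfl rfl rfl rfl rfl
    (HEq.refl (X.idSqV (uApp hF hG adj (G.obj r)))) tf
  have t2' := t2.trans (X.hCompSq_idSqV_eqSq hX (uApp hF hG adj (G.obj r)) E0)
  have t3 := X.vCompSq_congr rfl rfl rfl rfl rfl rfl rfl t2' tr
  have t4 := X.vCompSq_eqSq_left hX
    (show X.hComp (uApp hF hG adj (G.obj r))
          (X.hComp (G.hmap (eApp hF hG adj r)) (ΛX.hol (G.vmap k)))
        = X.hComp (uApp hF hG adj (G.obj r))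
            (X.hComp (ΛX.hol (G.vmap (F.vmap (G.vmap k)))) (G.hmap (eApp hF hG adj r'))) by
      rw [E0])
    (X.eqSq (show X.hComp (uApp hF hG adj (G.obj r))
          (X.hComp (ΛX.hol (G.vmap (F.vmap (G.vmap k)))) (G.hmap (eApp hF hG adj r')))
        = X.hComp (X.hComp (ΛX.hol (G.vmap k)) (uApp hF hG adj (G.obj r')))
            (G.hmap (eApp hF hG adj r')) by
      rw [← X.hAssoc, unit_bound hX hA ΛX ΛA hF hG cF cG adj (G.vmap k)]))
  have t5 := ΛX.fold_idSqH (G.vmap k)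
  refine (t1.trans (t3.trans t4)).trans ?_
  refine HEq.trans ((X.eqSq_heq_idSqV _).trans (X.idSqV_congr (show
      X.hComp (uApp hF hG adj (G.obj r))
          (X.hComp (ΛX.hol (G.vmap (F.vmap (G.vmap k)))) (G.hmap (eApp hF hG adj r')))
        = ΛX.hol (G.vmap k) by
    rw [show ΛX.hol (G.vmap (F.vmap (G.vmap k)))
          = G.hmap (F.hmap (ΛX.hol (G.vmap k))) by
        rw [← cG.hol (F.vmap (G.vmap k)), ← cF.hol (G.vmap k)],
      ← X.hAssoc, ← unit_bound_hor hX hA ΛX ΛA hF hG cF cG adj (ΛX.hol (G.vmap k)),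
      X.hAssoc, htriR', X.hComp_id]))) ?_
  exact t5.symm

/-- From a 2-adjunction on horizontal 2-categories to a horizontal double
adjunction. -/
noncomputable def backwardAdj : HorDoubleAdj F G where
  F_laws := hF
  G_laws := hG
  unit :=
    { app := fun a => uApp hF hG adj a
      sq := fun j => unitSq hX hA ΛX ΛA hF hG cF cG adj j }
  counit :=
    { app := fun r => eApp hF hG adj r
      sq := fun k => counitSq hX hA ΛX ΛA hF hG cF cG adj k }
  unit_laws :=
    { sq_id := fun a => unit_sq_id hX hA ΛX ΛA hF hG cF cG adj a
      sq_comp := fun j j' => unit_sq_comp hX hA ΛX ΛA hF hG cF cG adj j j'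
      natural_hor := fun f => unit_bound_hor hX hA ΛX ΛA hF hG cF cG adj f
      natural := fun α => unit_natural hX hA ΛX ΛA hF hG cF cG adj α }
  counit_laws :=
    { sq_id := fun r => counit_sq_id hX hA ΛX ΛA hF hG cF cG adj r
      sq_comp := fun k k' => counit_sq_comp hX hA ΛX ΛA hF hG cF cG adj k k'
      natural_hor := fun f => counit_bound_hor hX hA ΛX ΛA hF hG cF cG adj f
      natural := fun β => counit_natural hX hA ΛX ΛA hF hG cF cG adj β }
  triangleF_obj := fun a => adj.triangleF a
  triangleF_sq := fun j => triangleF_sq hX hA ΛX ΛA hF hG cF cG adj j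
  triangleG_obj := fun r => adj.triangleG r
  triangleG_sq := fun k => triangleG_sq hX hA ΛX ΛA hF hG cF cG adj k

end Backward
/-- Let `A` and `X` be double categories with foldings, and
`F : X → A`, `G : A → X` double functors compatible with the foldings.  Then
`F` and `G` are horizontal double adjoints if and only if their horizontal
2-functors `𝐇F` and `𝐇G` are 2-adjoints. -/
theorem fold_compatible_double_adjunction_iff_horizontal_two_adjunction
    {X A : DoubleCat} (hX : X.Laws) (hA : A.Laws)
    (ΛX : X.Folding) (ΛA : A.Folding)
    (F : DoubleFunctor X A) (G : DoubleFunctor A X)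
    (hF : F.Laws) (hG : G.Laws)
    (cF : FoldCompat F ΛX ΛA) (cG : FoldCompat G ΛA ΛX) :
    Nonempty (HorDoubleAdj F G) ↔ Nonempty (TwoAdjunction (F.toH hF) (G.toH hG)) := by
  exact ⟨fun ⟨h⟩ => ⟨forwardAdj F G hF hG h⟩,
    fun ⟨h⟩ => ⟨backwardAdj hX hA ΛX ΛA hF hG cF cG h⟩⟩
end

section
/- If D is a double category with folding whose holonomy is fully faithful, then the folding Λ : D → Q(H D) is an isomorphism of double categories. -/
set_option linter.unusedVariables false

/-! Core definitions: strict 2-categories and strict double categories. -/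

universe u v w x u' v' w' x' u'' v'' w'' x''

/-- The double functor `Λ : D → 𝔔(𝐇D)` determined by a folding. -/
def DoubleCat.Folding.toFunctor {D : DoubleCat} (Λ : D.Folding) :
    DoubleFunctor D (TwoCat.Quintet D.H) where
  obj a := a
  hmap f := f
  vmap j := Λ.hol j
  smap α := Λ.fold α

/-- A double functor is an isomorphism of double categories when it is
bijective on objects, on horizontal and vertical morphisms, and on squares. -/
def DoubleFunctor.IsIso {C D : DoubleCat} (F : DoubleFunctor C D) : Prop :=
  Function.Bijective F.obj ∧
  (∀ {a b : C.Obj}, Function.Bijective (fun f : C.Hor a b => F.hmap f)) ∧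
  (∀ {a b : C.Obj}, Function.Bijective (fun j : C.Ver a b => F.vmap j)) ∧
  (∀ {a b c d : C.Obj} (f : C.Hor a b) (j : C.Ver a c) (k : C.Ver b d)
    (g : C.Hor c d), Function.Bijective (fun α : C.Sq f j k g => F.smap α))

/-- Auxiliary: `recast` is heq to the original square. -/
theorem DoubleCat.recast_heq_s10 (D : DoubleCat) {a b c d : D.Obj} {f f' : D.Hor a b}
    {j j' : D.Ver a c} {k k' : D.Ver b d} {g g' : D.Hor c d}
    (hf : f = f') (hj : j = j') (hk : k = k') (hg : g = g') (α : D.Sq f j k g) :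
    HEq (D.recast hf hj hk hg α) α := by
  subst hf; subst hj; subst hk; subst hg; rfl

/-- Auxiliary: `TwoCat.recast` is heq to the original cell. -/
theorem TwoCat.recast_heq_s10 (K : TwoCat) {a b : K.Obj} {f f' g g' : K.Hom a b}
    (hf : f = f') (hg : g = g') (α : K.Cell f g) :
    HEq (K.recast hf hg α) α := by
  subst hf; subst hg; rfl

/-- Auxiliary: congruence for vertical composition of squares along heq. -/
theorem DoubleCat.vCompSq_congr_s10 (D : DoubleCat) {a b c d e e' : D.Obj}
    {f f' : D.Hor a b} {j j' : D.Ver a c} {k k' : D.Ver b d} {g g' : D.Hor c d}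
    {j₂ j₂' : D.Ver c e} {k₂ k₂' : D.Ver d e'} {h h' : D.Hor e e'}
    (hf : f = f') (hj : j = j') (hk : k = k') (hg : g = g')
    (hj₂ : j₂ = j₂') (hk₂ : k₂ = k₂') (hh : h = h')
    {α : D.Sq f j k g} {α' : D.Sq f' j' k' g'}
    {β : D.Sq g j₂ k₂ h} {β' : D.Sq g' j₂' k₂' h'}
    (hα : HEq α α') (hβ : HEq β β') :
    HEq (D.vCompSq α β) (D.vCompSq α' β') := by
  subst hf; subst hj; subst hk; subst hg; subst hj₂; subst hk₂; subst hh
  cases hα; cases hβ; rfl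

/-- If `D` is a double category with a folding whose
holonomy is fully faithful, then the folding `Λ : D → 𝔔(𝐇D)` is an
isomorphism of double categories. -/
theorem folding_with_fully_faithful_holonomy_is_iso
    (D : DoubleCat) (hD : D.Laws) (Λ : D.Folding)
    (ff : ∀ a b : D.Obj, Function.Bijective (fun j : D.Ver a b => Λ.hol j)) :
    Λ.toFunctor.Laws ∧ Λ.toFunctor.IsIso := by
  constructor
  · refine ⟨fun a => rfl, fun f g => rfl, Λ.hol_id, Λ.hol_comp, ?_, ?_, ?_, ?_⟩
    · -- smap_idSqV
      intro a b f
      exact (Λ.fold_id (D.idSqV f)).trans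
        ((D.H).recast_heq_s10 (D.hComp_id f).symm (D.hId_comp f).symm (D.idSqV f)).symm
    · -- smap_idSqH
      intro a b j
      exact (Λ.fold_idSqH j).trans
        ((D.H).recast_heq_s10 (D.hId_comp (Λ.hol j)).symm (D.hComp_id (Λ.hol j)).symm
          (D.idSqV (Λ.hol j))).symm
    · -- smap_hComp
      intro a b c a' b' c' f g j k l f' g' α β
      refine (Λ.fold_hComp α β).trans ?_
      have hY : D.recast (D.hAssoc f (Λ.hol k) g') rfl rfl rfl
            (D.hCompSq (Λ.fold α) (D.idSqV g'))
          = (D.H).recast (D.hAssoc f (Λ.hol k) g') rfl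
            (D.hCompSq (Λ.fold α) (D.idSqV g')) :=
        eq_of_heq ((D.recast_heq_s10 _ _ _ _ _).trans
          ((D.H).recast_heq_s10 _ _ _).symm)
      refine HEq.trans ?_
        ((D.H).recast_heq_s10 (D.hAssoc f g (Λ.hol l)).symm (D.hAssoc (Λ.hol j) f' g')
          ((D.H).vcomp (D.hCompSq (D.idSqV f) (Λ.fold β))
            ((D.H).recast (D.hAssoc f (Λ.hol k) g') rfl
              (D.hCompSq (Λ.fold α) (D.idSqV g'))))).symm
      rw [hY]
      exact (D.recast_heq_s10 rfl (D.vId_comp _) (D.vId_comp _) rfl _).symm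
    · -- smap_vComp
      intro a b c d e e' f j₁ k₁ g j₂ k₂ h α β
      refine (Λ.fold_vComp α β).trans ?_
      have hA : HEq
          (D.hCompSq (Λ.fold α) (D.idSqV (Λ.hol k₂)))
          ((D.H).recast (D.hAssoc f (Λ.hol k₁) (Λ.hol k₂))
            (D.hAssoc (Λ.hol j₁) g (Λ.hol k₂))
            (D.hCompSq (Λ.fold α) (D.idSqV (Λ.hol k₂)))) :=
        ((D.H).recast_heq_s10 _ _ _).symm
      have hB : HEq
          (D.recast (D.hAssoc (Λ.hol j₁) g (Λ.hol k₂)).symm rfl rfl rfl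
            (D.hCompSq (D.idSqV (Λ.hol j₁)) (Λ.fold β)))
          (D.hCompSq (D.idSqV (Λ.hol j₁)) (Λ.fold β)) :=
        D.recast_heq_s10 _ _ _ _ _
      have hmid := D.vCompSq_congr_s10
        (D.hAssoc f (Λ.hol k₁) (Λ.hol k₂)) rfl rfl
        (D.hAssoc (Λ.hol j₁) g (Λ.hol k₂)) rfl rfl rfl hA hB
      refine hmid.trans ?_
      refine HEq.trans ?_
        ((D.H).recast_heq_s10 rfl (D.hAssoc (Λ.hol j₁) (Λ.hol j₂) h).symm
          ((D.H).vcomp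
            ((D.H).recast (D.hAssoc f (Λ.hol k₁) (Λ.hol k₂))
              (D.hAssoc (Λ.hol j₁) g (Λ.hol k₂))
              (D.hCompSq (Λ.fold α) (D.idSqV (Λ.hol k₂))))
            (D.hCompSq (D.idSqV (Λ.hol j₁)) (Λ.fold β)))).symm
      exact (D.recast_heq_s10 rfl (D.vId_comp _) (D.vId_comp _) rfl _).symm
  · exact ⟨Function.bijective_id, fun {a b} => Function.bijective_id,
      fun {a b} => ff a b, fun f j k g => Λ.fold_bij f j k g⟩
end
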